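/- arXiv:1511.02792 — 3 statements merged into one kernel-verified Lean document; each statement's English description precedes it below -/
import Mathlib

section
/- Let zeta = (eta, xi) be a C^r critical commuting pair (r >= 1). Then there exist open intervals V_- containing I_xi and V_+ containing I_eta, and C^r homeomorphisms xi-hat : V_- -> xi-hat(V_-) ⊂ R extending xi and eta-hat : V_+ -> eta-hat(V_+) ⊂ R extending eta, such that (eta-hat ∘ xi-hat)(x) = (xi-hat ∘ eta-hat)(x) for all x in the set C = { x in V_- ∩ V_+ : eta-hat(x) in V_- and xi-hat(x) in V_+ }, which is an open interval containing the origin. -/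
open Set Filter Topology

/-- A (critical commuting) pair of interval maps, modelled as total real functions;
`eta` is defined on `[0, xi 0]` and `xi` on `[eta 0, 0]`. -/
structure CritPair where
  eta : ℝ → ℝ
  xi : ℝ → ℝ

/-- The `C^r` norm of `f` on a set `s` (supremum of the absolute values of the
iterated derivatives within `s` of order `≤ r`). -/
noncomputable def crNormOn (r : ℕ) (f : ℝ → ℝ) (s : Set ℝ) : ℝ :=
  sSup {y : ℝ | ∃ j ≤ r, ∃ x ∈ s, y = |iteratedDerivWithin j f s x|}

/-- `z` is a `C^r` critical commuting pair whose critical point (the origin) has odd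
type `2d+1`. -/
def IsCritPair (r d : ℕ) (z : CritPair) : Prop :=
  1 ≤ d ∧ z.eta 0 < 0 ∧ 0 < z.xi 0 ∧
  ContDiffOn ℝ r z.eta (Icc 0 (z.xi 0)) ∧
  ContDiffOn ℝ r z.xi (Icc (z.eta 0) 0) ∧
  StrictMonoOn z.eta (Icc 0 (z.xi 0)) ∧
  StrictMonoOn z.xi (Icc (z.eta 0) 0) ∧
  (∀ x ∈ Icc 0 (z.xi 0), x ≠ 0 → 0 < deriv z.eta x) ∧
  (∀ x ∈ Icc (z.eta 0) 0, x ≠ 0 → 0 < deriv z.xi x) ∧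
  z.eta (z.xi 0) = z.xi (z.eta 0) ∧ z.eta (z.xi 0) ≠ 0 ∧
  (∃ e : ℝ, 0 < e ∧ ∃ phi psi : ℝ → ℝ,
    ContDiffOn ℝ r phi (Ioo (-e) e) ∧ ContDiffOn ℝ r psi (Ioo (-e) e) ∧
    phi 0 = 0 ∧ psi 0 = 0 ∧
    (∀ x ∈ Ioo (-e) e, 0 < deriv phi x) ∧ (∀ x ∈ Ioo (-e) e, 0 < deriv psi x) ∧
    (∀ x ∈ Ioo (-e) e, z.eta x = phi x ^ (2 * d + 1) + z.eta 0) ∧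
    (∀ x ∈ Ioo (-e) e, z.xi x = psi x ^ (2 * d + 1) + z.xi 0)) ∧
  (∀ j : ℕ, 1 ≤ j → j ≤ r →
    iteratedDerivWithin j (z.eta ∘ z.xi) (Iic 0) 0 =
      iteratedDerivWithin j (z.xi ∘ z.eta) (Ici 0) 0)

/-- Case I period: `(xi ∘ eta)(0) ∈ I_eta` and `eta^[a+1](xi 0) < 0 ≤ eta^[a](xi 0)`. -/
def PeriodI (z : CritPair) (a : ℕ) : Prop :=
  z.eta^[a + 1] (z.xi 0) < 0 ∧ 0 ≤ z.eta^[a] (z.xi 0)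

/-- Case II period (symmetric). -/
def PeriodII (z : CritPair) (a : ℕ) : Prop :=
  0 < z.xi^[a + 1] (z.eta 0) ∧ z.xi^[a] (z.eta 0) ≤ 0

/-- `z` is renormalizable with period `a`. -/
def PeriodOf (z : CritPair) (a : ℕ) : Prop :=
  (0 < z.eta (z.xi 0) ∧ PeriodI z a) ∨ (z.eta (z.xi 0) < 0 ∧ PeriodII z a)

/-- Conjugation of a pair by the homothety `x ↦ c * x`. -/
noncomputable def rescale (c : ℝ) (z : CritPair) : CritPair :=
  ⟨fun x => z.eta (c * x) / c, fun x => z.xi (c * x) / c⟩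

/-- Pre-renormalization in case I. -/
def preRenormI (z : CritPair) (a : ℕ) : CritPair :=
  ⟨z.eta, fun x => z.eta^[a] (z.xi x)⟩

/-- Pre-renormalization in case II. -/
def preRenormII (z : CritPair) (a : ℕ) : CritPair :=
  ⟨fun x => z.xi^[a] (z.eta x), z.xi⟩

open scoped Classical in
/-- The pre-renormalization operator (the identity on non-renormalizable pairs). -/
noncomputable def preRenormOp (z : CritPair) : CritPair :=
  if h : ∃ a, PeriodOf z a then
    if 0 < z.eta (z.xi 0) then preRenormI z h.choose else preRenormII z h.choose
  else z

/-- The renormalization operator: pre-renormalize, then rescale so that the new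
`xi`-interval becomes `[-1, 0]`. -/
noncomputable def renormOp (z : CritPair) : CritPair :=
  rescale |(preRenormOp z).eta 0| (preRenormOp z)

/-- Renormalization with a prescribed period, in case I. -/
noncomputable def renormI (z : CritPair) (a : ℕ) : CritPair :=
  rescale |z.eta 0| (preRenormI z a)

/-- The Möbius transformation sending `u ↦ -1`, `0 ↦ 0`, `v ↦ 1`. -/
noncomputable def mob (u v x : ℝ) : ℝ := x * (v - u) / ((u + v) * x - 2 * u * v)

/-- The inverse of `mob u v`. -/
noncomputable def mobInv (u v y : ℝ) : ℝ := 2 * u * v * y / ((u + v) * y - (v - u))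

/-- The `eta`-branch of `z` conjugated by the Möbius normalization. -/
noncomputable def conjEta (z : CritPair) : ℝ → ℝ :=
  fun x => mob (z.eta 0) (z.xi 0) (z.eta (mobInv (z.eta 0) (z.xi 0) x))

/-- The `xi`-branch of `z` conjugated by the Möbius normalization. -/
noncomputable def conjXi (z : CritPair) : ℝ → ℝ :=
  fun x => mob (z.eta 0) (z.xi 0) (z.xi (mobInv (z.eta 0) (z.xi 0) x))

/-- The `C^r` distance `d_r` on critical commuting pairs. -/
noncomputable def cDist (r : ℕ) (z1 z2 : CritPair) : ℝ :=
  max |z1.xi 0 / z1.eta 0 - z2.xi 0 / z2.eta 0|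
    (max (crNormOn r (fun x => conjXi z1 x - conjXi z2 x) (Icc (-1) 0))
      (crNormOn r (fun x => conjEta z1 x - conjEta z2 x) (Icc 0 1)))

/-- A pair is normalized if `eta 0 = -1`. -/
def Normalized (z : CritPair) : Prop := z.eta 0 = -1

/-- The Schwarzian derivative. -/
noncomputable def schwarzian (f : ℝ → ℝ) (x : ℝ) : ℝ :=
  iteratedDeriv 3 f x / deriv f x - 3 / 2 * (iteratedDeriv 2 f x / deriv f x) ^ 2

/-- The pair has negative Schwarzian derivative. -/
def NegSchwarzian (z : CritPair) : Prop :=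
  (∀ x ∈ Icc 0 (z.xi 0), x ≠ 0 → schwarzian z.eta x < 0) ∧
  (∀ x ∈ Icc (z.eta 0) 0, x ≠ 0 → schwarzian z.xi x < 0)

/-- A normalized pair which is renormalizable with period `a` is `K`-controlled. -/
def KControlled (K : ℝ) (z : CritPair) (a : ℕ) : Prop :=
  1 / K ≤ z.xi 0 ∧ z.xi 0 ≤ K ∧
  1 / K ≤ z.xi 0 - z.eta (z.xi 0) ∧
  1 / K ≤ z.eta^[a - 1] (z.xi 0) - z.eta^[a] (z.xi 0) ∧
  1 / K ≤ z.eta^[a] (z.xi 0) ∧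
  z.eta^[a + 1] (z.xi 0) ≤ -(1 / K) ∧
  crNormOn 3 z.xi (Icc (-1) 0) ≤ K ∧
  crNormOn 3 z.eta (Icc 0 (z.xi 0)) ≤ K ∧
  ∀ x ∈ Icc (z.eta^[a] (z.xi 0)) (z.xi 0), 1 / K ≤ deriv z.eta x

/-- `z` is infinitely renormalizable. -/
def InfRenorm (z : CritPair) : Prop := ∀ n : ℕ, ∃ a, PeriodOf (renormOp^[n] z) a

/-- Two pairs have the same (irrational) rotation number: all the renormalization
periods coincide, i.e. the continued fraction expansions agree. -/
def SameRot (z0 z1 : CritPair) : Prop :=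
  ∀ n a, PeriodOf (renormOp^[n] z0) a ↔ PeriodOf (renormOp^[n] z1) a

/-- Two pairs, renormalizable with the same period `a`, are `L`-synchronized. -/
def Synchronized (L : ℝ) (z0 z1 : CritPair) (a : ℕ) : Prop :=
  |z1.eta^[a] (z1.xi 0) - z0.eta^[a] (z0.xi 0)| ≤ L * cDist 2 z0 z1

/-- The points `x_i = eta^[i](xi 0)`. -/
def xpt (z : CritPair) (i : ℕ) : ℝ := z.eta^[i] (z.xi 0)

/-- The diffeomorphism `f_i = A_{i+1}⁻¹ ∘ eta ∘ A_i : [0,1] → [0,1]`, where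
`A_i : [0,1] → [x_i, x_{i-1}]` is the orientation-preserving affine bijection. -/
noncomputable def fBranch (z : CritPair) (i : ℕ) : ℝ → ℝ :=
  fun x =>
    (z.eta ((xpt z (i - 1) - xpt z i) * x + xpt z i) - xpt z (i + 1)) /
      (xpt z i - xpt z (i + 1))

/-- The nonlinearity `Nf = f''/f'`. -/
noncomputable def nonlin (f : ℝ → ℝ) : ℝ → ℝ := fun x => iteratedDeriv 2 f x / deriv f x

/-- `sup_{x ∈ s} |f x - g x|`. -/
noncomputable def supAbsDiffOn (f g : ℝ → ℝ) (s : Set ℝ) : ℝ :=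
  sSup {y : ℝ | ∃ x ∈ s, y = |f x - g x|}

/-- The order `z0 ≤_t z1` on commuting pairs. -/
def OrderLE (t : ℝ) (z0 z1 : CritPair) : Prop :=
  (∀ x : ℝ, max (z0.eta 0) (z1.eta 0) ≤ x → x ≤ 0 → z0.xi x + t ≤ z1.xi x) ∧
  (∀ x : ℝ, 0 ≤ x → x ≤ min (z0.xi 0) (z1.xi 0) → z0.eta x + t ≤ z1.eta x) ∧
  z0.eta 0 ≤ z1.eta 0 ∧ z0.xi 0 ≤ z1.xi 0




/-- Glue two `C^r` functions at a point where all derivatives up to `r` match. -/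
lemma contDiffOn_glue (r : ℕ) : ∀ (f g : ℝ → ℝ) {u q v : ℝ}, u < q → q < v →
    ContDiffOn ℝ r f (Icc u q) → ContDiffOn ℝ r g (Icc q v) →
    (∀ j ≤ r, iteratedDerivWithin j f (Icc u q) q = iteratedDerivWithin j g (Icc q v) q) →
    ContDiffOn ℝ r (fun x => if x ≤ q then f x else g x) (Ioo u v) := by
  induction r with
  | zero =>
    intro f g u q v huq hqv hf hg hmatch
    have hval : f q = g q := by
      have := hmatch 0 le_rfl
      simpa [iteratedDerivWithin_zero] using this
    rw [show ((0:ℕ):WithTop ℕ∞) = 0 from rfl, contDiffOn_zero]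
    intro x hx
    set h : ℝ → ℝ := fun x => if x ≤ q then f x else g x with hh
    rcases lt_trichotomy x q with hlt | heq | hgt
    · have hxm : Icc u q ∈ 𝓝 x := Icc_mem_nhds hx.1 hlt
      have hcf : ContinuousAt f x :=
        ((hf.continuousOn) x ⟨le_of_lt hx.1, le_of_lt hlt⟩).continuousAt hxm
      have heq : h =ᶠ[𝓝 x] f := by
        filter_upwards [Iio_mem_nhds hlt] with y hy
        simp [hh, le_of_lt (mem_Iio.mp hy)]
      exact (hcf.congr heq.symm).continuousWithinAt
    · subst heq
      have h1 : ContinuousWithinAt h (Icc u x) x := by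
        apply ((hf.continuousOn) x ⟨le_of_lt huq, le_rfl⟩).congr
        · intro y hy; simp [hh, hy.2]
        · simp [hh]
      have h2 : ContinuousWithinAt h (Icc x v) x := by
        apply ((hg.continuousOn) x ⟨le_rfl, le_of_lt hqv⟩).congr
        · intro y hy
          rcases eq_or_lt_of_le hy.1 with rfl | hlt
          · simp [hh, hval]
          · simp [hh, not_le.mpr hlt]
        · simp [hh, hval]
      have := h1.union h2
      rw [Icc_union_Icc_eq_Icc (le_of_lt huq) (le_of_lt hqv)] at this
      exact this.mono Ioo_subset_Icc_self
    · have hxm : Icc q v ∈ 𝓝 x := Icc_mem_nhds hgt hx.2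
      have hcg : ContinuousAt g x :=
        ((hg.continuousOn) x ⟨le_of_lt hgt, le_of_lt hx.2⟩).continuousAt hxm
      have heq : h =ᶠ[𝓝 x] g := by
        filter_upwards [Ioi_mem_nhds hgt] with y hy
        simp [hh, not_le.mpr (mem_Ioi.mp hy)]
      exact (hcg.congr heq.symm).continuousWithinAt
  | succ n IH =>
    intro f g u q v huq hqv hf hg hmatch
    set h : ℝ → ℝ := fun x => if x ≤ q then f x else g x with hh
    have hval : f q = g q := by
      have := hmatch 0 (by omega)
      simpa [iteratedDerivWithin_zero] using this
    have hUf : UniqueDiffOn ℝ (Icc u q) := uniqueDiffOn_Icc huq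
    have hUg : UniqueDiffOn ℝ (Icc q v) := uniqueDiffOn_Icc hqv
    have hqf : q ∈ Icc u q := ⟨le_of_lt huq, le_rfl⟩
    have hqg : q ∈ Icc q v := ⟨le_rfl, le_of_lt hqv⟩
    have hone : (1 : WithTop ℕ∞) ≤ ((n + 1 : ℕ) : WithTop ℕ∞) := by
      exact_mod_cast Nat.one_le_iff_ne_zero.mpr (Nat.succ_ne_zero n)
    -- the common derivative at q
    set Df : ℝ := derivWithin f (Icc u q) q with hDf
    have hDfg : Df = derivWithin g (Icc q v) q := by
      have := hmatch 1 (by omega)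
      rwa [iteratedDerivWithin_one, iteratedDerivWithin_one] at this
    have hfd : HasDerivWithinAt f Df (Icc u q) q :=
      ((hf.differentiableOn (lt_of_lt_of_le zero_lt_one hone).ne') q hqf).hasDerivWithinAt
    have hgd : HasDerivWithinAt g Df (Icc q v) q := by
      rw [hDfg]
      exact ((hg.differentiableOn (lt_of_lt_of_le zero_lt_one hone).ne') q hqg).hasDerivWithinAt
    have hEqf : ∀ y ∈ Icc u q, h y = f y := fun y hy => by simp [hh, hy.2]
    have hEqg : ∀ y ∈ Icc q v, h y = g y := by
      intro y hy
      rcases eq_or_lt_of_le hy.1 with rfl | hlt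
      · simp [hh, hval]
      · simp [hh, not_le.mpr hlt]
    have hhq : HasDerivAt h Df q := by
      have h1 : HasDerivWithinAt h Df (Icc u q) q := hfd.congr hEqf (hEqf q hqf)
      have h2 : HasDerivWithinAt h Df (Icc q v) q := hgd.congr hEqg (hEqg q hqg)
      have := h1.union h2
      rw [Icc_union_Icc_eq_Icc (le_of_lt huq) (le_of_lt hqv)] at this
      exact this.hasDerivAt (Icc_mem_nhds huq hqv)
    have hfleft : ∀ x, u < x → x < q → h =ᶠ[𝓝 x] f := by
      intro x hu hx
      filter_upwards [Iio_mem_nhds hx] with y hy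
      simp [hh, le_of_lt (mem_Iio.mp hy)]
    have hgright : ∀ x, q < x → x < v → h =ᶠ[𝓝 x] g := by
      intro x hx hv
      filter_upwards [Ioi_mem_nhds hx] with y hy
      simp [hh, not_le.mpr (mem_Ioi.mp hy)]
    have hdiff : DifferentiableOn ℝ h (Ioo u v) := by
      intro x hx
      rcases lt_trichotomy x q with hlt | rfl | hgt
      · have : ContDiffAt ℝ (n+1 : ℕ) f x := hf.contDiffAt (Icc_mem_nhds hx.1 hlt)
        have hdf : DifferentiableAt ℝ f x := this.differentiableAt (lt_of_lt_of_le zero_lt_one hone).ne'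
        exact ((hfleft x hx.1 hlt).differentiableAt_iff.mpr hdf).differentiableWithinAt
      · exact hhq.differentiableAt.differentiableWithinAt
      · have : ContDiffAt ℝ (n+1 : ℕ) g x := hg.contDiffAt (Icc_mem_nhds hgt hx.2)
        have hdg : DifferentiableAt ℝ g x := this.differentiableAt (lt_of_lt_of_le zero_lt_one hone).ne'
        exact ((hgright x hgt hx.2).differentiableAt_iff.mpr hdg).differentiableWithinAt
    -- the glued derivative
    have hstep : ∀ j ≤ n, iteratedDerivWithin j (derivWithin f (Icc u q)) (Icc u q) q =
        iteratedDerivWithin j (derivWithin g (Icc q v)) (Icc q v) q := by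
      intro j hj
      rw [← iteratedDerivWithin_succ', ← iteratedDerivWithin_succ']
      exact hmatch (j+1) (by omega)
    have hcast : ((n : ℕ) : WithTop ℕ∞) + 1 ≤ ((n + 1 : ℕ) : WithTop ℕ∞) := by
      exact_mod_cast le_rfl
    have hIH : ContDiffOn ℝ n
        (fun x => if x ≤ q then derivWithin f (Icc u q) x else derivWithin g (Icc q v) x)
        (Ioo u v) :=
      IH _ _ huq hqv (hf.derivWithin hUf hcast) (hg.derivWithin hUg hcast) hstep
    have hderiv : ∀ x ∈ Ioo u v, deriv h x =
        (fun x => if x ≤ q then derivWithin f (Icc u q) x else derivWithin g (Icc q v) x) x := by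
      intro x hx
      rcases lt_trichotomy x q with hlt | rfl | hgt
      · have h1 : deriv h x = deriv f x := (hfleft x hx.1 hlt).deriv_eq
        have h2 : derivWithin f (Icc u q) x = deriv f x :=
          derivWithin_of_mem_nhds (Icc_mem_nhds hx.1 hlt)
        simp [le_of_lt hlt, h1, h2]
      · simp [hhq.deriv, hDf]
      · have h1 : deriv h x = deriv g x := (hgright x hgt hx.2).deriv_eq
        have h2 : derivWithin g (Icc q v) x = deriv g x :=
          derivWithin_of_mem_nhds (Icc_mem_nhds hgt hx.2)
        simp [not_le.mpr hgt, h1, h2]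
    have : ((n + 1 : ℕ) : WithTop ℕ∞) = (n : WithTop ℕ∞) + 1 := by exact_mod_cast rfl
    rw [this]
    refine (contDiffOn_succ_iff_deriv_of_isOpen isOpen_Ioo).2 ⟨hdiff, ?_, ?_⟩
    · intro hω; exact absurd hω (by simp)
    · exact hIH.congr hderiv


lemma strictMonoOn_glue {f g : ℝ → ℝ} {u q v : ℝ} (hu : u ≤ q) (hv : q ≤ v)
    (hf : StrictMonoOn f (Icc u q)) (hg : StrictMonoOn g (Icc q v)) (hval : f q = g q) :
    StrictMonoOn (fun x => if x ≤ q then f x else g x) (Icc u v) := by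
  intro x hx y hy hxy
  by_cases hxq : x ≤ q <;> by_cases hyq : y ≤ q <;> simp only [hxq, hyq, if_true, if_false]
  · exact hf ⟨hx.1, hxq⟩ ⟨hy.1, hyq⟩ hxy
  · push_neg at hyq
    calc f x ≤ f q := hf.monotoneOn ⟨hx.1, hxq⟩ ⟨hu, le_rfl⟩ hxq
    _ = g q := hval
    _ < g y := hg ⟨le_rfl, hv⟩ ⟨le_of_lt hyq, hy.2⟩ hyq
  · exact absurd (le_trans (le_of_lt hxy) hyq) hxq
  · push_neg at hxq
    exact hg ⟨le_of_lt hxq, hx.2⟩ ⟨le_trans (le_of_lt hxq) (le_of_lt hxy), hy.2⟩ hxy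

/-- Taylor-type polynomial with prescribed derivatives `d j` at `a`. -/
noncomputable def tpoly (d : ℕ → ℝ) (n : ℕ) (a : ℝ) : ℝ → ℝ :=
  fun x => ∑ j ∈ Finset.range (n+1), d j * (x - a)^j / (j.factorial : ℝ)

lemma tpoly_contDiff (d : ℕ → ℝ) (n : ℕ) (a : ℝ) {m : WithTop ℕ∞} :
    ContDiff ℝ m (tpoly d n a) := by
  unfold tpoly
  apply ContDiff.sum
  intro j _
  exact ((contDiff_const.mul ((contDiff_id.sub contDiff_const).pow j))).div_const _

lemma tpoly_hasDerivAt (d : ℕ → ℝ) (n : ℕ) (a x : ℝ) :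
    HasDerivAt (tpoly d (n+1) a) (tpoly (fun j => d (j+1)) n a x) x := by
  have H : ∀ j : ℕ, HasDerivAt (fun y => d j * (y - a)^j / (j.factorial : ℝ))
      (d j * ((j : ℝ) * (x - a)^(j-1)) / (j.factorial : ℝ)) x := by
    intro j
    have h1 : HasDerivAt (fun y : ℝ => (y - a)^j) ((j:ℝ) * (x - a)^(j-1)) x := by
      simpa using (((hasDerivAt_id x).sub_const a).fun_pow j)
    exact (h1.const_mul (d j)).div_const _
  have h := HasDerivAt.fun_sum (fun j (_ : j ∈ Finset.range (n+2)) => H j)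
  refine h.congr_deriv (Eq.symm ?_)
  rw [Finset.sum_range_succ']
  simp only [Nat.cast_zero, zero_mul, mul_zero, zero_div, add_zero]
  unfold tpoly
  apply Finset.sum_congr rfl
  intro j _
  simp only [Nat.add_sub_cancel, Nat.cast_add, Nat.cast_one]
  have : ((j+1).factorial : ℝ) = (j+1) * (j.factorial : ℝ) := by
    push_cast [Nat.factorial_succ]; ring
  rw [this]
  have hj1 : ((j:ℝ)+1) ≠ 0 := by positivity
  have hfac : (j.factorial : ℝ) ≠ 0 := by positivity
  field_simp

lemma tpoly_deriv (d : ℕ → ℝ) (n : ℕ) (a : ℝ) :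
    deriv (tpoly d (n+1) a) = tpoly (fun j => d (j+1)) n a := by
  funext x
  exact (tpoly_hasDerivAt d n a x).deriv

lemma tpoly_iteratedDeriv (n : ℕ) : ∀ (d : ℕ → ℝ) (a : ℝ) (j : ℕ), j ≤ n →
    iteratedDeriv j (tpoly d n a) a = d j := by
  induction n with
  | zero =>
    intro d a j hj
    interval_cases j
    simp [iteratedDeriv_zero, tpoly]
  | succ n IH =>
    intro d a j hj
    cases j with
    | zero =>
      simp only [iteratedDeriv_zero]
      unfold tpoly
      rw [Finset.sum_range_succ']
      simp
    | succ j =>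
      rw [iteratedDeriv_succ', tpoly_deriv]
      exact IH _ a j (by omega)

lemma tpoly_apply_self (d : ℕ → ℝ) (n : ℕ) (a : ℝ) : tpoly d n a a = d 0 := by
  unfold tpoly
  rw [Finset.sum_range_succ']
  simp

lemma tpoly_deriv_self (d : ℕ → ℝ) (n : ℕ) (a : ℝ) : deriv (tpoly d (n+1) a) a = d 1 := by
  rw [tpoly_deriv]; exact tpoly_apply_self _ n a

/-- For a globally `C^∞` function, `iteratedDerivWithin` agrees with `iteratedDeriv` on
sets with unique differentiability. -/
lemma iteratedDerivWithin_eq_iteratedDeriv_smooth {s : Set ℝ} (hs : UniqueDiffOn ℝ s)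
    (j : ℕ) : ∀ (f : ℝ → ℝ), ContDiff ℝ (⊤ : ℕ∞) f → ∀ x ∈ s,
    iteratedDerivWithin j f s x = iteratedDeriv j f x := by
  induction j with
  | zero => intro f hf x hx; simp
  | succ j IH =>
    intro f hf x hx
    rw [iteratedDerivWithin_succ', iteratedDeriv_succ']
    have heq : Set.EqOn (derivWithin f s) (deriv f) s := by
      intro y hy
      exact ((hf.differentiable (by simp)).differentiableAt).derivWithin
        (hs.uniqueDiffWithinAt hy)
    rw [iteratedDerivWithin_congr heq hx]
    exact IH (deriv f) ((contDiff_infty_iff_deriv.mp (by exact_mod_cast hf)).2.of_le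
      (by exact_mod_cast le_top)) x hx


lemma exists_local_inverse {r : ℕ} (hr : 1 ≤ r) {f : ℝ → ℝ} {b : ℝ}
    (hf : ContDiffAt ℝ r f b) (hd0 : deriv f b ≠ 0) :
    ∃ g : ℝ → ℝ, ContDiffAt ℝ r g (f b) ∧ g (f b) = b ∧
      (∀ᶠ x in 𝓝 b, g (f x) = x) ∧ (∀ᶠ y in 𝓝 (f b), f (g y) = y) := by
  have hone : (1 : WithTop ℕ∞) ≤ (r : WithTop ℕ∞) := by exact_mod_cast hr
  have hdiff : DifferentiableAt ℝ f b := hf.differentiableAt (lt_of_lt_of_le zero_lt_one hone).ne'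
  have hfd : HasDerivAt f (deriv f b) b := hdiff.hasDerivAt
  have hf' := hfd.hasFDerivAt_equiv hd0
  refine ⟨hf.localInverse hf' (lt_of_lt_of_le zero_lt_one hone).ne', hf.to_localInverse hf' (lt_of_lt_of_le zero_lt_one hone).ne',
    hf.localInverse_apply_image hf' (lt_of_lt_of_le zero_lt_one hone).ne', ?_, ?_⟩
  · exact (hf.hasStrictFDerivAt' hf' (lt_of_lt_of_le zero_lt_one hone).ne').eventually_left_inverse
  · exact (hf.hasStrictFDerivAt' hf' (lt_of_lt_of_le zero_lt_one hone).ne').eventually_right_inverse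

lemma iteratedDerivWithin_congr_set' {f : ℝ → ℝ} {s t : Set ℝ} {x : ℝ} (h : s =ᶠ[𝓝 x] t)
    (j : ℕ) : iteratedDerivWithin j f s x = iteratedDerivWithin j f t x := by
  simp only [iteratedDerivWithin]
  rw [iteratedFDerivWithin_congr_set h]

set_option maxHeartbeats 2000000 in
/-- Extension of a commuting pair to commuting `C^r` homeomorphic extensions on
open intervals. -/
theorem commuting_extensions (r d : ℕ) (hr : 1 ≤ r) (z : CritPair)
    (hz : IsCritPair r d z) :
    ∃ (Vm Vp : Set ℝ) (xih etah : ℝ → ℝ),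
      (∃ u v : ℝ, u < v ∧ Vm = Set.Ioo u v) ∧
      (∃ u v : ℝ, u < v ∧ Vp = Set.Ioo u v) ∧
      Set.Icc (z.eta 0) 0 ⊆ Vm ∧ Set.Icc 0 (z.xi 0) ⊆ Vp ∧
      ContDiffOn ℝ r xih Vm ∧ ContDiffOn ℝ r etah Vp ∧
      StrictMonoOn xih Vm ∧ StrictMonoOn etah Vp ∧
      Set.EqOn xih z.xi (Set.Icc (z.eta 0) 0) ∧
      Set.EqOn etah z.eta (Set.Icc 0 (z.xi 0)) ∧
      (∀ x ∈ {x | x ∈ Vm ∩ Vp ∧ etah x ∈ Vm ∧ xih x ∈ Vp}, etah (xih x) = xih (etah x)) ∧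
      (∃ u v : ℝ, u < 0 ∧ 0 < v ∧
        {x | x ∈ Vm ∩ Vp ∧ etah x ∈ Vm ∧ xih x ∈ Vp} = Set.Ioo u v) := by
  obtain ⟨-, ha, hb, hηC, hξC, hηm, hξm, hηd, hξd, hcomm0, hc0, -, hmatch⟩ := hz
  set η := z.eta with hηdef
  set ξ := z.xi with hξdef
  set a := η 0 with hadef
  set b := ξ 0 with hbdef
  obtain ⟨r', hr'⟩ : ∃ r', r = r' + 1 := ⟨r - 1, by omega⟩
  have hone : (1 : WithTop ℕ∞) ≤ (r : WithTop ℕ∞) := by exact_mod_cast hr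
  have hU1 : UniqueDiffOn ℝ (Icc a 0) := uniqueDiffOn_Icc ha
  have hU2 : UniqueDiffOn ℝ (Icc 0 b) := uniqueDiffOn_Icc hb
  have haI : a ∈ Icc a 0 := ⟨le_rfl, ha.le⟩
  have hbI : b ∈ Icc 0 b := ⟨hb.le, le_rfl⟩
  -- derivatives at the endpoints
  have hder_ξa : 0 < deriv ξ a := hξd a haI (ne_of_lt ha)
  have hdiff_ξa : DifferentiableAt ℝ ξ a := by
    by_contra hc
    rw [deriv_zero_of_not_differentiableAt hc] at hder_ξa
    exact lt_irrefl 0 hder_ξa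
  have hder_ηb : 0 < deriv η b := hηd b hbI (ne_of_gt hb)
  have hdiff_ηb : DifferentiableAt ℝ η b := by
    by_contra hc
    rw [deriv_zero_of_not_differentiableAt hc] at hder_ηb
    exact lt_irrefl 0 hder_ηb
  ---- Stage 1 : extension of ξ below a by a Taylor polynomial
  set d1 : ℕ → ℝ := fun j => iteratedDerivWithin j ξ (Icc a 0) a with hd1def
  set T1 : ℝ → ℝ := tpoly d1 r a with hT1def
  have hT1C : ∀ m : WithTop ℕ∞, ContDiff ℝ m T1 := fun m => tpoly_contDiff d1 r a
  have hT1dval : deriv T1 a = deriv ξ a := by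
    rw [hT1def, hr', tpoly_deriv_self]
    show iteratedDerivWithin 1 ξ (Icc a 0) a = _
    rw [iteratedDerivWithin_one]
    exact hdiff_ξa.derivWithin (hU1 a haI)
  have hder_T1a : 0 < deriv T1 a := hT1dval ▸ hder_ξa
  have hder_T1cont : Continuous (deriv T1) := by
    rw [hT1def, hr', tpoly_deriv]
    exact (tpoly_contDiff _ _ _ (m := 0)).continuous
  obtain ⟨ε₁, hε₁, hball₁⟩ := Metric.mem_nhds_iff.mp
    ((isOpen_lt continuous_const hder_T1cont).mem_nhds hder_T1a)
  rw [Real.ball_eq_Ioo] at hball₁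
  set u₁ : ℝ := a - ε₁/2 with hu₁def
  have hu₁a : u₁ < a := by rw [hu₁def]; linarith
  have hT1mono : StrictMonoOn T1 (Icc u₁ a) := by
    apply strictMonoOn_of_deriv_pos (convex_Icc _ _) (hT1C 0).continuous.continuousOn
    intro x hx
    rw [interior_Icc] at hx
    rw [hu₁def] at hx
    exact hball₁ ⟨by linarith [hx.1], by linarith [hx.2]⟩
  have hmatch₁ : ∀ j ≤ r, iteratedDerivWithin j T1 (Icc u₁ a) a =
      iteratedDerivWithin j ξ (Icc a 0) a := by
    intro j hj
    rw [iteratedDerivWithin_eq_iteratedDeriv_smooth (uniqueDiffOn_Icc hu₁a) j T1 (hT1C _)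
      a ⟨hu₁a.le, le_rfl⟩, hT1def, tpoly_iteratedDeriv r d1 a j hj]
  set ξ0e : ℝ → ℝ := fun x => if x ≤ a then T1 x else ξ x with hξ0def
  have hξ0C : ContDiffOn ℝ r ξ0e (Ioo u₁ 0) :=
    contDiffOn_glue r T1 ξ hu₁a ha ((hT1C r).contDiffOn) hξC hmatch₁
  have hT1a : T1 a = ξ a := by
    rw [hT1def, tpoly_apply_self]
    simp [hd1def]
  have hξ0mono : StrictMonoOn ξ0e (Icc u₁ 0) :=
    strictMonoOn_glue hu₁a.le ha.le hT1mono hξm hT1a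
  have hξ0eq : EqOn ξ0e ξ (Icc a 0) := by
    intro x hx
    by_cases hxa : x ≤ a
    · have : x = a := le_antisymm hxa hx.1
      subst this
      simpa [hξ0def] using hT1a
    · simp [hξ0def, hxa]
  ---- Stage 2 : extension of η above b by a Taylor polynomial
  set d2 : ℕ → ℝ := fun j => iteratedDerivWithin j η (Icc 0 b) b with hd2def
  set T2 : ℝ → ℝ := tpoly d2 r b with hT2def
  have hT2C : ∀ m : WithTop ℕ∞, ContDiff ℝ m T2 := fun m => tpoly_contDiff _ r b
  have hT2dval : deriv T2 b = deriv η b := by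
    rw [hT2def, hr', tpoly_deriv_self]
    show iteratedDerivWithin 1 η (Icc 0 b) b = _
    rw [iteratedDerivWithin_one]
    exact hdiff_ηb.derivWithin (hU2 b hbI)
  have hder_T2b : 0 < deriv T2 b := hT2dval ▸ hder_ηb
  have hder_T2cont : Continuous (deriv T2) := by
    rw [hT2def, hr', tpoly_deriv]
    exact (tpoly_contDiff _ _ _ (m := 0)).continuous
  obtain ⟨ε₂, hε₂, hball₂⟩ := Metric.mem_nhds_iff.mp
    ((isOpen_lt continuous_const hder_T2cont).mem_nhds hder_T2b)
  rw [Real.ball_eq_Ioo] at hball₂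
  set v₂ : ℝ := b + ε₂/2 with hv₂def
  have hbv₂ : b < v₂ := by rw [hv₂def]; linarith
  have hT2mono : StrictMonoOn T2 (Icc b v₂) := by
    apply strictMonoOn_of_deriv_pos (convex_Icc _ _) (hT2C 0).continuous.continuousOn
    intro x hx
    rw [interior_Icc] at hx
    rw [hv₂def] at hx
    exact hball₂ ⟨by linarith [hx.1], by linarith [hx.2]⟩
  have hmatch₂ : ∀ j ≤ r, iteratedDerivWithin j η (Icc 0 b) b =
      iteratedDerivWithin j T2 (Icc b v₂) b := by
    intro j hj
    rw [iteratedDerivWithin_eq_iteratedDeriv_smooth (uniqueDiffOn_Icc hbv₂) j T2 (hT2C _)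
      b ⟨le_rfl, hbv₂.le⟩, hT2def, tpoly_iteratedDeriv r _ b j hj]
  set η0e : ℝ → ℝ := fun x => if x ≤ b then η x else T2 x with hη0def
  have hη0C : ContDiffOn ℝ r η0e (Ioo 0 v₂) :=
    contDiffOn_glue r η T2 hb hbv₂ hηC ((hT2C r).contDiffOn) hmatch₂
  have hT2b : T2 b = η b := by
    rw [hT2def, tpoly_apply_self]
    simp [hd2def]
  have hη0mono : StrictMonoOn η0e (Icc 0 v₂) :=
    strictMonoOn_glue hb.le hbv₂.le hηm hT2mono hT2b.symm
  have hη0eq : EqOn η0e η (Icc 0 b) := fun x hx => if_pos hx.2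
  ---- Stage 3 : the glued composition F
  have hξcont0 : ContinuousWithinAt ξ (Icc a 0) 0 := hξC.continuousOn 0 ⟨ha.le, le_rfl⟩
  have hηcont0 : ContinuousWithinAt η (Icc 0 b) 0 := hηC.continuousOn 0 ⟨le_rfl, hb.le⟩
  have hev1 : ∀ᶠ x in 𝓝[Icc a 0] 0, 0 < ξ x := hξcont0.eventually_mem (Ioi_mem_nhds hb)
  have hev2 : ∀ᶠ x in 𝓝[Icc 0 b] 0, η x < 0 := hηcont0.eventually_mem (Iio_mem_nhds ha)
  obtain ⟨δL1, hδL1, hL1⟩ := Metric.mem_nhdsWithin_iff.mp hev1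
  obtain ⟨δR1, hδR1, hR1⟩ := Metric.mem_nhdsWithin_iff.mp hev2
  set δ₁ : ℝ := min (min (δL1/2) (δR1/2)) (min (-a/2) (b/2)) with hδ₁def
  have hδ₁pos : 0 < δ₁ := by
    apply lt_min (lt_min (by linarith) (by linarith)) (lt_min (by linarith) (by linarith))
  have hδ₁a : δ₁ < -a := lt_of_le_of_lt (le_trans (min_le_right _ _) (min_le_left _ _)) (by linarith)
  have hδ₁b : δ₁ < b := lt_of_le_of_lt (le_trans (min_le_right _ _) (min_le_right _ _)) (by linarith)
  have hδ₁L : δ₁ < δL1 := lt_of_le_of_lt (le_trans (min_le_left _ _) (min_le_left _ _)) (by linarith)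
  have hδ₁R : δ₁ < δR1 := lt_of_le_of_lt (le_trans (min_le_left _ _) (min_le_right _ _)) (by linarith)
  have hsub1 : Icc (-δ₁) 0 ⊆ Icc a 0 := Icc_subset_Icc (by linarith) le_rfl
  have hsub2 : Icc 0 δ₁ ⊆ Icc 0 b := Icc_subset_Icc le_rfl (by linarith)
  have hξpos : ∀ x ∈ Icc (-δ₁) 0, 0 ≤ ξ x := by
    intro x hx
    have hxb : x ∈ Metric.ball (0:ℝ) δL1 ∩ Icc a 0 := by
      constructor
      · rw [Real.ball_eq_Ioo]
        constructor
        · have : -δL1 < -δ₁ := by linarith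
          calc (0:ℝ) - δL1 = -δL1 := by ring
          _ < -δ₁ := this
          _ ≤ x := hx.1
        · calc x ≤ 0 := hx.2
          _ < 0 + δL1 := by linarith
      · exact hsub1 hx
    exact (hL1 hxb).le
  have hηneg : ∀ x ∈ Icc 0 δ₁, η x ≤ 0 := by
    intro x hx
    have hxb : x ∈ Metric.ball (0:ℝ) δR1 ∩ Icc 0 b := by
      constructor
      · rw [Real.ball_eq_Ioo]
        exact ⟨lt_of_lt_of_le (by linarith) hx.1, lt_of_le_of_lt hx.2 (by linarith)⟩
      · exact hsub2 hx
    exact (hR1 hxb).le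
  have hmapξ : MapsTo ξ (Icc (-δ₁) 0) (Icc 0 b) := by
    intro x hx
    refine ⟨hξpos x hx, ?_⟩
    have := hξm.monotoneOn (hsub1 hx) ⟨ha.le, le_rfl⟩ hx.2
    simpa using this
  have hmapη : MapsTo η (Icc 0 δ₁) (Icc a 0) := by
    intro x hx
    refine ⟨?_, hηneg x hx⟩
    have := hηm.monotoneOn ⟨le_rfl, hb.le⟩ (hsub2 hx) hx.1
    simpa using this
  have hFf : ContDiffOn ℝ r (η ∘ ξ) (Icc (-δ₁) 0) := hηC.comp (hξC.mono hsub1) hmapξ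
  have hFg : ContDiffOn ℝ r (ξ ∘ η) (Icc 0 δ₁) := hξC.comp (hηC.mono hsub2) hmapη
  have hset1 : Icc (-δ₁) 0 =ᶠ[𝓝 (0:ℝ)] Iic 0 := by
    rw [Filter.eventuallyEq_set]
    filter_upwards [Ioi_mem_nhds (by linarith : -δ₁ < (0:ℝ))] with y hy
    exact ⟨fun h => h.2, fun h => ⟨(mem_Ioi.mp hy).le, h⟩⟩
  have hset2 : Icc 0 δ₁ =ᶠ[𝓝 (0:ℝ)] Ici 0 := by
    rw [Filter.eventuallyEq_set]
    filter_upwards [Iio_mem_nhds hδ₁pos] with y hy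
    exact ⟨fun h => h.1, fun h => ⟨h, (mem_Iio.mp hy).le⟩⟩
  have hmatchF : ∀ j ≤ r, iteratedDerivWithin j (η ∘ ξ) (Icc (-δ₁) 0) 0 =
      iteratedDerivWithin j (ξ ∘ η) (Icc 0 δ₁) 0 := by
    intro j hj
    rcases Nat.eq_zero_or_pos j with rfl | hjpos
    · simp only [iteratedDerivWithin_zero, Function.comp_apply]
      exact hcomm0
    · rw [iteratedDerivWithin_congr_set' hset1, iteratedDerivWithin_congr_set' hset2]
      exact hmatch j hjpos hj
  set F : ℝ → ℝ := fun x => if x ≤ 0 then (η ∘ ξ) x else (ξ ∘ η) x with hFdef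
  have hFC : ContDiffOn ℝ r F (Ioo (-δ₁) δ₁) :=
    contDiffOn_glue r (η ∘ ξ) (ξ ∘ η) (by linarith) hδ₁pos hFf hFg hmatchF
  have hcompmono1 : StrictMonoOn (η ∘ ξ) (Icc (-δ₁) 0) := by
    intro x hx y hy hxy
    exact hηm (hmapξ hx) (hmapξ hy) (hξm (hsub1 hx) (hsub1 hy) hxy)
  have hcompmono2 : StrictMonoOn (ξ ∘ η) (Icc 0 δ₁) := by
    intro x hx y hy hxy
    exact hξm (hmapη hx) (hmapη hy) (hηm (hsub2 hx) (hsub2 hy) hxy)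
  have hFmono : StrictMonoOn F (Icc (-δ₁) δ₁) :=
    strictMonoOn_glue (by linarith) hδ₁pos.le hcompmono1 hcompmono2 hcomm0
  have hF0 : F 0 = η b := by simp [hFdef]; rfl
  ---- Stage 4 : local inverses
  have hbmem : b ∈ Ioo (0:ℝ) v₂ := ⟨hb, hbv₂⟩
  have hη0diffb : ContDiffAt ℝ r η0e b := hη0C.contDiffAt (isOpen_Ioo.mem_nhds hbmem)
  have hη0db : deriv η0e b = deriv η b := by
    have e1 : derivWithin η0e (Icc 0 b) b = deriv η0e b :=
      (hη0diffb.differentiableAt (lt_of_lt_of_le zero_lt_one hone).ne').derivWithin (hU2 b hbI)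
    have e2 : derivWithin η0e (Icc 0 b) b = derivWithin η (Icc 0 b) b :=
      derivWithin_congr hη0eq (hη0eq hbI)
    have e3 : derivWithin η (Icc 0 b) b = deriv η b := hdiff_ηb.derivWithin (hU2 b hbI)
    rw [← e1, e2, e3]
  obtain ⟨gη, hgηC, hgηb, hgηleft, hgηright⟩ :=
    exists_local_inverse hr hη0diffb (by rw [hη0db]; exact ne_of_gt hder_ηb)
  have hη0b : η0e b = η b := hη0eq hbI
  rw [hη0b] at hgηC hgηb hgηright
  have hamem : a ∈ Ioo u₁ 0 := ⟨hu₁a, ha⟩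
  have hξ0diffa : ContDiffAt ℝ r ξ0e a := hξ0C.contDiffAt (isOpen_Ioo.mem_nhds hamem)
  have hξ0da : deriv ξ0e a = deriv ξ a := by
    have e1 : derivWithin ξ0e (Icc a 0) a = deriv ξ0e a :=
      (hξ0diffa.differentiableAt (lt_of_lt_of_le zero_lt_one hone).ne').derivWithin (hU1 a haI)
    have e2 : derivWithin ξ0e (Icc a 0) a = derivWithin ξ (Icc a 0) a :=
      derivWithin_congr hξ0eq (hξ0eq haI)
    have e3 : derivWithin ξ (Icc a 0) a = deriv ξ a := hdiff_ξa.derivWithin (hU1 a haI)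
    rw [← e1, e2, e3]
  obtain ⟨gξ, hgξC, hgξa, hgξleft, hgξright⟩ :=
    exists_local_inverse hr hξ0diffa (by rw [hξ0da]; exact ne_of_gt hder_ξa)
  have hξ0a : ξ0e a = η b := by rw [hξ0eq haI]; exact hcomm0.symm
  rw [hξ0a] at hgξC hgξa hgξright
  ---- Stage 5 : choice of radii
  obtain ⟨Uη, hUηmem, hUηC⟩ := hgηC.contDiffOn le_rfl (by simp)
  obtain ⟨Uξ, hUξmem, hUξC⟩ := hgξC.contDiffOn le_rfl (by simp)
  set ra : ℝ := min ((a - u₁)/2) (-a/4) with hradef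
  have hrapos : 0 < ra := lt_min (by linarith) (by linarith)
  have hra1 : ra ≤ (a - u₁)/2 := min_le_left _ _
  have hra2 : ra ≤ -a/4 := min_le_right _ _
  set rb : ℝ := min (ε₂/8) (b/2) with hrbdef
  have hrbpos : 0 < rb := lt_min (by linarith) (by linarith)
  have hrb1 : rb ≤ ε₂/8 := min_le_left _ _
  have hrb2 : rb ≤ b/2 := min_le_right _ _
  have hgηev : ∀ᶠ y in 𝓝 (η b), gη y ∈ Ioo (b - rb) (b + rb) :=
    hgηC.continuousAt.eventually_mem
      (by rw [hgηb]; exact Ioo_mem_nhds (by linarith) (by linarith))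
  have hgξev : ∀ᶠ y in 𝓝 (η b), gξ y ∈ Ioo (a - ra) (a + ra) :=
    hgξC.continuousAt.eventually_mem
      (by rw [hgξa]; exact Ioo_mem_nhds (by linarith) (by linarith))
  have hevc : ∀ᶠ y in 𝓝 (η b), η0e (gη y) = y ∧ ξ0e (gξ y) = y ∧ y ∈ Uη ∧ y ∈ Uξ ∧
      gη y ∈ Ioo (b - rb) (b + rb) ∧ gξ y ∈ Ioo (a - ra) (a + ra) := by
    filter_upwards [hgηright, hgξright, hUηmem, hUξmem, hgηev, hgξev] with
      y h1 h2 h3 h4 h5 h6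
    exact ⟨h1, h2, h3, h4, h5, h6⟩
  rw [Filter.eventually_iff] at hevc
  obtain ⟨rc, hrc, hballc⟩ := Metric.mem_nhds_iff.mp hevc
  have hW : ∀ y ∈ Metric.ball (η b) rc, η0e (gη y) = y ∧ ξ0e (gξ y) = y ∧ y ∈ Uη ∧ y ∈ Uξ ∧
      gη y ∈ Ioo (b - rb) (b + rb) ∧ gξ y ∈ Ioo (a - ra) (a + ra) := fun y hy => hballc hy
  have hevSb : ∀ᶠ x in 𝓝[Icc a 0] 0, gη (η0e (ξ x)) = ξ x := hξcont0.eventually hgηleft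
  obtain ⟨δL2, hδL2, hL2⟩ := Metric.mem_nhdsWithin_iff.mp hevSb
  have hevSa : ∀ᶠ x in 𝓝[Icc 0 b] 0, gξ (ξ0e (η x)) = η x := hηcont0.eventually hgξleft
  obtain ⟨δR2, hδR2, hR2⟩ := Metric.mem_nhdsWithin_iff.mp hevSa
  have hFcont0 : ContinuousAt F 0 :=
    (hFC.contDiffAt (isOpen_Ioo.mem_nhds ⟨by linarith, hδ₁pos⟩)).continuousAt
  have hevF : ∀ᶠ x in 𝓝 (0:ℝ), F x ∈ Metric.ball (η b) rc :=
    hFcont0.eventually_mem (by rw [hF0]; exact Metric.ball_mem_nhds _ hrc)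
  obtain ⟨δ₀, hδ₀, hB0⟩ := Metric.mem_nhds_iff.mp hevF
  clear_value a b u₁ v₂ δ₁ ra rb
  set vp : ℝ := b + ε₂/4 with hvpdef
  have hbvp : b < vp := by rw [hvpdef]; linarith
  set δ : ℝ := min (min (δ₀/2) (δ₁/2)) (min (min (δL2/2) (δR2/2)) (min (-a/2) (b/2)))
    with hδdef
  have hδpos : 0 < δ :=
    lt_min (lt_min (by linarith) (by linarith))
      (lt_min (lt_min (by linarith) (by linarith)) (lt_min (by linarith) (by linarith)))
  have hδ0' : δ ≤ δ₀/2 := le_trans (min_le_left _ _) (min_le_left _ _)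
  have hδ1' : δ ≤ δ₁/2 := le_trans (min_le_left _ _) (min_le_right _ _)
  have hδL2' : δ ≤ δL2/2 := le_trans (min_le_right _ _) (le_trans (min_le_left _ _) (min_le_left _ _))
  have hδR2' : δ ≤ δR2/2 := le_trans (min_le_right _ _) (le_trans (min_le_left _ _) (min_le_right _ _))
  have hδa' : δ ≤ -a/2 := le_trans (min_le_right _ _) (le_trans (min_le_right _ _) (min_le_left _ _))
  have hδb' : δ ≤ b/2 := le_trans (min_le_right _ _) (le_trans (min_le_right _ _) (min_le_right _ _))
  have hδδ₁ : δ < δ₁ := by linarith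
  have hδb : δ < b := by linarith
  have hδa : δ < -a := by linarith
  have hu₁δ : u₁ < -δ := by linarith
  clear_value vp δ
  ---- Stage 6 : the final extensions
  have hballP : ∀ x ∈ Ioo (-δ) δ, F x ∈ Metric.ball (η b) rc := by
    intro x hx
    apply hB0
    rw [Real.ball_eq_Ioo]
    exact ⟨by linarith [hx.1], by linarith [hx.2]⟩
  have K1 : ∀ x ∈ Ioc (-δ) 0, gη (F x) = ξ x := by
    intro x hx
    have hx1 : x ∈ Icc (-δ₁) 0 := ⟨by linarith [hx.1], hx.2⟩
    have hxI : x ∈ Icc a 0 := ⟨by linarith [hx.1], hx.2⟩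
    have hFx : F x = η0e (ξ x) := by
      calc F x = η (ξ x) := by rw [hFdef]; simp [hx.2]
      _ = η0e (ξ x) := (hη0eq (hmapξ hx1)).symm
    rw [hFx]
    apply hL2
    constructor
    · rw [Real.ball_eq_Ioo]
      exact ⟨by linarith [hx.1], by linarith [hx.2]⟩
    · exact hxI
  have K2 : ∀ x ∈ Ico 0 δ, gξ (F x) = η x := by
    intro x hx
    have hx2 : x ∈ Icc 0 δ₁ := ⟨hx.1, by linarith [hx.2]⟩
    have h2 : ξ0e (η x) = ξ (η x) := hξ0eq (hmapη hx2)
    have hFx : F x = ξ0e (η x) := by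
      rcases eq_or_lt_of_le hx.1 with he | hlt
      · rw [h2, ← he, hF0, ← hadef]
        exact hcomm0
      · calc F x = ξ (η x) := by rw [hFdef]; simp [not_le.mpr hlt]
        _ = ξ0e (η x) := h2.symm
    rw [hFx]
    apply hR2
    constructor
    · rw [Real.ball_eq_Ioo]
      exact ⟨by linarith [hx.1], by linarith [hx.2]⟩
    · exact ⟨hx.1, by linarith [hx.2]⟩
  set ξh : ℝ → ℝ := fun x => if x ≤ -δ then ξ0e x else gη (F x) with hξhdef
  set ηh : ℝ → ℝ := fun x => if x < 0 then gξ (F x) else η0e x with hηhdef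
  set Vm : Set ℝ := Ioo u₁ δ with hVmdef
  set Vp : Set ℝ := Ioo (-δ) vp with hVpdef
  have K3 : ∀ x ∈ Ioc u₁ 0, ξh x = ξ0e x := by
    intro x hx
    by_cases hxd : x ≤ -δ
    · simp only [hξhdef]
      rw [if_pos hxd]
    · push_neg at hxd
      have h1 : gη (F x) = ξ x := K1 x ⟨hxd, hx.2⟩
      have h3 : ξ0e x = ξ x := hξ0eq ⟨by linarith, hx.2⟩
      simp only [hξhdef]
      rw [if_neg (not_le.mpr hxd), h1, h3]
  have K4 : ∀ x ∈ Ioo (-δ) δ, ξh x = gη (F x) := by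
    intro x hx
    simp only [hξhdef]
    rw [if_neg (not_le.mpr hx.1)]
  have K5 : ∀ x ∈ Ioo (-δ) δ, ηh x = gξ (F x) := by
    intro x hx
    rcases lt_or_ge x 0 with h | h
    · simp only [hηhdef]
      rw [if_pos h]
    · have h1 : η0e x = η x := hη0eq ⟨h, by linarith [hx.2]⟩
      have h2 : gξ (F x) = η x := K2 x ⟨h, hx.2⟩
      simp only [hηhdef]
      rw [if_neg (not_lt.mpr h), h1, h2]
  have K6 : ∀ x : ℝ, 0 ≤ x → ηh x = η0e x := by
    intro x hx
    simp only [hηhdef]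
    rw [if_neg (not_lt.mpr hx)]
  -- smoothness
  have hξhC : ContDiffOn ℝ r ξh Vm := by
    intro x hx
    rw [hVmdef] at hx
    rcases lt_or_ge x 0 with hneg | hpos
    · have hxm : x ∈ Ioo u₁ 0 := ⟨hx.1, hneg⟩
      have h1 : ContDiffAt ℝ r ξ0e x := hξ0C.contDiffAt (isOpen_Ioo.mem_nhds hxm)
      have h2 : ξh =ᶠ[𝓝 x] ξ0e := by
        filter_upwards [isOpen_Ioo.mem_nhds hxm] with y hy
        exact K3 y ⟨hy.1, hy.2.le⟩
      exact (h1.congr_of_eventuallyEq h2).contDiffWithinAt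
    · have hxm : x ∈ Ioo (-δ) δ := ⟨by linarith, hx.2⟩
      have hFx := hballP x hxm
      have hgC : ContDiffAt ℝ r gη (F x) :=
        (hUηC.mono (fun y hy => (hW y hy).2.2.1)).contDiffAt (Metric.isOpen_ball.mem_nhds hFx)
      have hFxC : ContDiffAt ℝ r F x :=
        hFC.contDiffAt (isOpen_Ioo.mem_nhds ⟨by linarith [hxm.1], by linarith [hxm.2]⟩)
      have h2 : ξh =ᶠ[𝓝 x] (gη ∘ F) := by
        filter_upwards [isOpen_Ioo.mem_nhds hxm] with y hy
        exact K4 y hy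
      exact (((hgC.comp x hFxC)).congr_of_eventuallyEq h2).contDiffWithinAt
  have hηhC : ContDiffOn ℝ r ηh Vp := by
    intro x hx
    rw [hVpdef] at hx
    rcases lt_or_ge x δ with hxδ | hxδ
    · have hxm : x ∈ Ioo (-δ) δ := ⟨hx.1, hxδ⟩
      have hFx := hballP x hxm
      have hgC : ContDiffAt ℝ r gξ (F x) :=
        (hUξC.mono (fun y hy => (hW y hy).2.2.2.1)).contDiffAt (Metric.isOpen_ball.mem_nhds hFx)
      have hFxC : ContDiffAt ℝ r F x :=
        hFC.contDiffAt (isOpen_Ioo.mem_nhds ⟨by linarith [hxm.1], by linarith [hxm.2]⟩)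
      have h2 : ηh =ᶠ[𝓝 x] (gξ ∘ F) := by
        filter_upwards [isOpen_Ioo.mem_nhds hxm] with y hy
        exact K5 y hy
      exact (((hgC.comp x hFxC)).congr_of_eventuallyEq h2).contDiffWithinAt
    · have hx0 : 0 < x := lt_of_lt_of_le hδpos hxδ
      have hvpv₂ : vp < v₂ := by rw [hvpdef, hv₂def]; linarith
      have hxm : x ∈ Ioo 0 v₂ := ⟨hx0, by linarith [hx.2]⟩
      have h1 : ContDiffAt ℝ r η0e x := hη0C.contDiffAt (isOpen_Ioo.mem_nhds hxm)
      have h2 : ηh =ᶠ[𝓝 x] η0e := by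
        filter_upwards [Ioi_mem_nhds hx0] with y hy
        exact K6 y (le_of_lt (mem_Ioi.mp hy))
      exact (h1.congr_of_eventuallyEq h2).contDiffWithinAt
  -- monotonicity of the local inverses
  have hgηmono : ∀ y₁ ∈ Metric.ball (η b) rc, ∀ y₂ ∈ Metric.ball (η b) rc,
      y₁ < y₂ → gη y₁ < gη y₂ := by
    intro y₁ h₁ y₂ h₂ hlt
    by_contra hcon
    push_neg at hcon
    have m₁ : gη y₁ ∈ Icc 0 v₂ := by
      obtain ⟨h5a, h5b⟩ := (hW y₁ h₁).2.2.2.2.1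
      rw [hv₂def]
      exact ⟨by linarith, by linarith⟩
    have m₂ : gη y₂ ∈ Icc 0 v₂ := by
      obtain ⟨h5a, h5b⟩ := (hW y₂ h₂).2.2.2.2.1
      rw [hv₂def]
      exact ⟨by linarith, by linarith⟩
    have hle : y₂ ≤ y₁ := by
      have e₁ : η0e (gη y₁) = y₁ := (hW y₁ h₁).1
      have e₂ : η0e (gη y₂) = y₂ := (hW y₂ h₂).1
      rw [← e₁, ← e₂]
      exact hη0mono.monotoneOn m₂ m₁ hcon
    linarith
  have hgξmono : ∀ y₁ ∈ Metric.ball (η b) rc, ∀ y₂ ∈ Metric.ball (η b) rc,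
      y₁ < y₂ → gξ y₁ < gξ y₂ := by
    intro y₁ h₁ y₂ h₂ hlt
    by_contra hcon
    push_neg at hcon
    have m₁ : gξ y₁ ∈ Icc u₁ 0 := by
      obtain ⟨h6a, h6b⟩ := (hW y₁ h₁).2.2.2.2.2
      rw [mem_Icc]; exact ⟨by linarith, by linarith⟩
    have m₂ : gξ y₂ ∈ Icc u₁ 0 := by
      obtain ⟨h6a, h6b⟩ := (hW y₂ h₂).2.2.2.2.2
      rw [mem_Icc]; exact ⟨by linarith, by linarith⟩
    have hle : y₂ ≤ y₁ := by
      have e₁ : ξ0e (gξ y₁) = y₁ := (hW y₁ h₁).2.1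
      have e₂ : ξ0e (gξ y₂) = y₂ := (hW y₂ h₂).2.1
      rw [← e₁, ← e₂]
      exact hξ0mono.monotoneOn m₂ m₁ hcon
    linarith
  have hmono2 : ∀ x ∈ Ioo (-δ) δ, ∀ y ∈ Ioo (-δ) δ, x < y → ξh x < ξh y := by
    intro x hx y hy hxy
    rw [K4 x hx, K4 y hy]
    exact hgηmono _ (hballP x hx) _ (hballP y hy)
      (hFmono ⟨by linarith [hx.1], by linarith [hx.2]⟩
        ⟨by linarith [hy.1], by linarith [hy.2]⟩ hxy)
  have hmono5 : ∀ x ∈ Ioo (-δ) δ, ∀ y ∈ Ioo (-δ) δ, x < y → ηh x < ηh y := by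
    intro x hx y hy hxy
    rw [K5 x hx, K5 y hy]
    exact hgξmono _ (hballP x hx) _ (hballP y hy)
      (hFmono ⟨by linarith [hx.1], by linarith [hx.2]⟩
        ⟨by linarith [hy.1], by linarith [hy.2]⟩ hxy)
  have hξhmono : StrictMonoOn ξh Vm := by
    intro x hx y hy hxy
    rw [hVmdef] at hx hy
    rcases le_or_gt y 0 with hy0 | hy0
    · have e1 := K3 x ⟨hx.1, by linarith⟩
      have e2 := K3 y ⟨hy.1, hy0⟩
      rw [e1, e2]
      exact hξ0mono ⟨hx.1.le, by linarith⟩ ⟨hy.1.le, hy0⟩ hxy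
    · rcases le_or_gt x (-δ) with hxd | hxd
      · have e1 := K3 x ⟨hx.1, by linarith⟩
        have e0 := K3 0 ⟨by linarith, le_rfl⟩
        have h01 : ξh x < ξh 0 := by
          rw [e1, e0]
          exact hξ0mono ⟨hx.1.le, by linarith⟩ ⟨by linarith, le_rfl⟩ (by linarith)
        have h02 : ξh 0 < ξh y := hmono2 0 ⟨by linarith, hδpos⟩ y ⟨by linarith, hy.2⟩ hy0
        linarith
      · exact hmono2 x ⟨hxd, hx.2⟩ y ⟨by linarith, hy.2⟩ hxy
  have hηhmono : StrictMonoOn ηh Vp := by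
    intro x hx y hy hxy
    rw [hVpdef] at hx hy
    have hvpv₂ : vp < v₂ := by rw [hvpdef, hv₂def]; linarith
    rcases lt_or_ge y δ with hyδ | hyδ
    · exact hmono5 x ⟨hx.1, by linarith⟩ y ⟨hy.1, hyδ⟩ hxy
    · have hy0 : 0 < y := lt_of_lt_of_le hδpos hyδ
      have hyv : y ≤ v₂ := by linarith [hy.2]
      rcases lt_or_ge x 0 with hx0 | hx0
      · have h01 : ηh x < ηh 0 := hmono5 x ⟨hx.1, by linarith⟩ 0 ⟨by linarith, hδpos⟩ hx0
        have h02 : ηh 0 < ηh y := by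
          rw [K6 0 le_rfl, K6 y hy0.le]
          exact hη0mono ⟨le_rfl, by linarith⟩ ⟨hy0.le, hyv⟩ hy0
        linarith
      · rw [K6 x hx0, K6 y (by linarith)]
        exact hη0mono ⟨hx0, by linarith [hx.2]⟩ ⟨by linarith, hyv⟩ hxy
  -- the extensions agree with the original maps
  have hξheq : EqOn ξh ξ (Icc a 0) := by
    intro x hx
    by_cases hxd : x ≤ -δ
    · have h1 := K3 x ⟨by linarith [hx.1], hx.2⟩
      rw [h1]
      exact hξ0eq hx
    · push_neg at hxd
      have h1 := K4 x ⟨hxd, lt_of_le_of_lt hx.2 hδpos⟩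
      rw [h1]
      exact K1 x ⟨hxd, hx.2⟩
  have hηheq : EqOn ηh η (Icc 0 b) := by
    intro x hx
    rw [K6 x hx.1]
    exact hη0eq hx
  -- the commutation set
  have hVmVp : Vm ∩ Vp = Ioo (-δ) δ := by
    rw [hVmdef, hVpdef, Ioo_inter_Ioo, max_eq_right hu₁δ.le,
      min_eq_left (le_of_lt (by linarith : δ < vp))]
  have hmem1 : ∀ x ∈ Ioo (-δ) δ, ηh x ∈ Vm := by
    intro x hx
    obtain ⟨h6a, h6b⟩ := (hW _ (hballP x hx)).2.2.2.2.2
    rw [K5 x hx, hVmdef, mem_Ioo]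
    exact ⟨by linarith, by linarith⟩
  have hmem2 : ∀ x ∈ Ioo (-δ) δ, ξh x ∈ Vp := by
    intro x hx
    obtain ⟨h5a, h5b⟩ := (hW _ (hballP x hx)).2.2.2.2.1
    have hvp' : vp = b + ε₂/4 := hvpdef
    rw [K4 x hx, hVpdef, mem_Ioo]
    exact ⟨by linarith, by linarith⟩
  have hSset : {x | x ∈ Vm ∩ Vp ∧ ηh x ∈ Vm ∧ ξh x ∈ Vp} = Ioo (-δ) δ := by
    apply subset_antisymm
    · intro x hx
      rw [← hVmVp]
      exact hx.1
    · intro x hx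
      refine ⟨?_, hmem1 x hx, hmem2 x hx⟩
      rw [hVmVp]
      exact hx
  have hcommS : ∀ x ∈ {x | x ∈ Vm ∩ Vp ∧ ηh x ∈ Vm ∧ ξh x ∈ Vp},
      ηh (ξh x) = ξh (ηh x) := by
    intro x hxS
    have hx : x ∈ Ioo (-δ) δ := by rw [← hSset]; exact hxS
    obtain ⟨hP1, hP2, -, -, hP5, hP6⟩ := hW _ (hballP x hx)
    have l1 : ηh (ξh x) = F x := by
      rw [K4 x hx, K6 _ (by obtain ⟨h5a, -⟩ := hP5; linarith), hP1]
    have l2 : ξh (ηh x) = F x := by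
      rw [K5 x hx]
      have hbr : gξ (F x) ≤ -δ := by
        obtain ⟨-, h6b⟩ := hP6
        linarith
      show ξh (gξ (F x)) = F x
      simp only [hξhdef]
      rw [if_pos hbr]
      exact hP2
    rw [l1, l2]
  refine ⟨Vm, Vp, ξh, ηh, ⟨u₁, δ, by linarith, hVmdef⟩, ⟨-δ, vp, by linarith, hVpdef⟩,
    ?_, ?_, hξhC, hηhC, hξhmono, hηhmono, hξheq, hηheq, hcommS,
    ⟨-δ, δ, by linarith, hδpos, hSset⟩⟩
  · intro x hx
    rw [hVmdef]
    exact ⟨by linarith [hx.1], by linarith [hx.2]⟩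
  · intro x hx
    rw [hVpdef]
    exact ⟨by linarith [hx.1], by linarith [hx.2]⟩
end

section
/- Let I = [a, b] be a compact interval with a < b. For every M > 0 there exists K = K(M, I) > 0 with the following property: for any continuous functions phi, psi : I -> R with sup norms at most M, the maps f = N^{-1}(phi) and g = N^{-1}(psi) satisfy max over k in {0,1,2} of sup over I of |D^k f - D^k g| <= K * sup over I of |phi - psi|. Here N^{-1}(phi)(x) = a + (b - a) * ( integral from a to x of exp( integral from a to s of phi(t) dt ) ds ) / ( integral from a to b of exp( integral from a to s of phi(t) dt ) ds ), which is the orientation-preserving C^2 diffeomorphism of I onto itself whose nonlinearity f''/f' equals phi. -/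
open Set MeasureTheory intervalIntegral

/-- The inverse of the nonlinearity operator on `[a, b]`: the orientation-preserving
`C^2` diffeomorphism of `[a,b]` whose nonlinearity `f''/f'` is `phi`. -/
noncomputable def ninv (a b : ℝ) (phi : ℝ → ℝ) : ℝ → ℝ := fun x =>
  a + (b - a) * (∫ s in a..x, Real.exp (∫ t in a..s, phi t)) /
      (∫ s in a..b, Real.exp (∫ t in a..s, phi t))

noncomputable def nE (a : ℝ) (phi : ℝ → ℝ) (x : ℝ) : ℝ := Real.exp (∫ t in a..x, phi t)
noncomputable def nF (a : ℝ) (phi : ℝ → ℝ) (x : ℝ) : ℝ := ∫ s in a..x, nE a phi s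
noncomputable def nD (a b : ℝ) (phi : ℝ → ℝ) : ℝ := nF a phi b

lemma ftc_icc {a b : ℝ} {f : ℝ → ℝ} (hf : ContinuousOn f (Set.Icc a b))
    {x : ℝ} (hx : x ∈ Set.Icc a b) :
    HasDerivWithinAt (fun u => ∫ t in a..u, f t) (f x) (Set.Icc a b) x := by
  haveI : Fact (x ∈ Set.Icc a b) := ⟨hx⟩
  have hint : IntervalIntegrable f volume a x := by
    apply ContinuousOn.intervalIntegrable
    rw [Set.uIcc_of_le hx.1]
    exact hf.mono (Set.Icc_subset_Icc le_rfl hx.2)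
  exact intervalIntegral.integral_hasDerivWithinAt_right hint
    (hf.stronglyMeasurableAtFilter_nhdsWithin measurableSet_Icc x) (hf x hx)

lemma abs_exp_sub_exp_le {u v B : ℝ} (hu : u ≤ B) (hv : v ≤ B) :
    |Real.exp u - Real.exp v| ≤ Real.exp B * |u - v| := by
  wlog h : v ≤ u generalizing u v
  · rw [abs_sub_comm, abs_sub_comm u v]; exact this hv hu (le_of_not_ge h)
  rw [abs_of_nonneg (sub_nonneg.2 (Real.exp_le_exp.2 h)), abs_of_nonneg (sub_nonneg.2 h)]
  have h2 : Real.exp v = Real.exp u * Real.exp (v - u) := by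
    rw [← Real.exp_add]; ring_nf
  nlinarith [Real.add_one_le_exp (v - u), Real.exp_pos u, Real.exp_le_exp.2 hu,
    Real.exp_pos (v - u)]

lemma div_sub_div_bound {n1 n2 d1 d2 m B e1 e2 : ℝ} (hm : 0 < m)
    (hd1 : m ≤ d1) (hd2 : m ≤ d2) (hn : |n1 - n2| ≤ e1) (hB : |n2| ≤ B)
    (hd : |d1 - d2| ≤ e2) :
    |n1 / d1 - n2 / d2| ≤ e1 / m + B * e2 / (m * m) := by
  have hd1' : 0 < d1 := hm.trans_le hd1
  have hd2' : 0 < d2 := hm.trans_le hd2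
  have key : n1 / d1 - n2 / d2 = (n1 - n2) / d1 + n2 * (d2 - d1) / (d1 * d2) := by
    field_simp; ring
  rw [key]
  have h1 : |(n1 - n2) / d1| ≤ e1 / m := by
    rw [abs_div, abs_of_pos hd1']
    exact div_le_div₀ ((abs_nonneg _).trans hn) hn hm hd1
  have h2 : |n2 * (d2 - d1) / (d1 * d2)| ≤ B * e2 / (m * m) := by
    rw [abs_div, abs_mul, abs_of_pos (mul_pos hd1' hd2')]
    have hnum : |n2| * |d2 - d1| ≤ B * e2 := by
      apply mul_le_mul hB _ (abs_nonneg _) ((abs_nonneg _).trans hB)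
      rwa [abs_sub_comm]
    exact div_le_div₀ (by nlinarith [(abs_nonneg n2).trans hB, (abs_nonneg (d1 - d2)).trans hd])
      hnum (mul_pos hm hm) (mul_le_mul hd1 hd2 hm.le hd1'.le)
  exact (abs_add_le _ _).trans (add_le_add h1 h2)

section formulas

variable {a b M δ : ℝ} {phi psi : ℝ → ℝ}

lemma nE_cont (hphi : ContinuousOn phi (Set.Icc a b)) :
    ContinuousOn (nE a phi) (Set.Icc a b) := by
  apply Real.continuous_exp.comp_continuousOn
  exact fun x hx => (ftc_icc hphi hx).continuousWithinAt

lemma nE_hasDeriv (hphi : ContinuousOn phi (Set.Icc a b)) {x : ℝ} (hx : x ∈ Set.Icc a b) :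
    HasDerivWithinAt (nE a phi) (phi x * nE a phi x) (Set.Icc a b) x := by
  have := (ftc_icc hphi hx).exp
  exact this.congr_deriv (by rw [mul_comm]; rfl)

lemma nF_hasDeriv (hphi : ContinuousOn phi (Set.Icc a b)) {x : ℝ} (hx : x ∈ Set.Icc a b) :
    HasDerivWithinAt (nF a phi) (nE a phi x) (Set.Icc a b) x :=
  ftc_icc (nE_cont hphi) hx

lemma ninv_hasDeriv (hphi : ContinuousOn phi (Set.Icc a b)) {x : ℝ} (hx : x ∈ Set.Icc a b) :
    HasDerivWithinAt (ninv a b phi) ((b - a) * nE a phi x / nD a b phi) (Set.Icc a b) x := by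
  have h := (((nF_hasDeriv hphi hx).const_mul (b - a)).div_const (nD a b phi)).const_add a
  exact h

lemma iter0 (x : ℝ) :
    iteratedDerivWithin 0 (ninv a b phi) (Set.Icc a b) x
      = a + (b - a) * nF a phi x / nD a b phi := by
  rw [iteratedDerivWithin_zero]; rfl

lemma iter1 (hab : a < b) (hphi : ContinuousOn phi (Set.Icc a b)) {x : ℝ}
    (hx : x ∈ Set.Icc a b) :
    iteratedDerivWithin 1 (ninv a b phi) (Set.Icc a b) x
      = (b - a) * nE a phi x / nD a b phi := by
  rw [iteratedDerivWithin_one]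
  exact (ninv_hasDeriv hphi hx).derivWithin (uniqueDiffOn_Icc hab x hx)

lemma iter2 (hab : a < b) (hphi : ContinuousOn phi (Set.Icc a b)) {x : ℝ}
    (hx : x ∈ Set.Icc a b) :
    iteratedDerivWithin 2 (ninv a b phi) (Set.Icc a b) x
      = (b - a) * (phi x * nE a phi x) / nD a b phi := by
  have h2 : (2 : ℕ) = 1 + 1 := rfl
  rw [h2, iteratedDerivWithin_succ]
  rw [derivWithin_congr (fun y hy => iter1 hab hphi hy) (iter1 hab hphi hx)]
  exact (((nE_hasDeriv hphi hx).const_mul (b - a)).div_const (nD a b phi)).derivWithin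
    (uniqueDiffOn_Icc hab x hx)

lemma J_bound (hbphi : ∀ t ∈ Set.Icc a b, |phi t| ≤ M) {x : ℝ} (hx : x ∈ Set.Icc a b) :
    |∫ t in a..x, phi t| ≤ M * (b - a) := by
  have hM0 : 0 ≤ M := (abs_nonneg _).trans (hbphi x hx)
  have h := intervalIntegral.norm_integral_le_of_norm_le_const (C := M) (f := phi) (a := a)
    (b := x) (by
      intro t ht
      rw [Set.uIoc_of_le hx.1] at ht
      exact hbphi t ⟨ht.1.le, ht.2.trans hx.2⟩)
  rw [Real.norm_eq_abs] at h
  refine h.trans ?_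
  rw [abs_of_nonneg (sub_nonneg.2 hx.1)]
  have : x - a ≤ b - a := by linarith [hx.2]
  nlinarith

lemma nE_le (hbphi : ∀ t ∈ Set.Icc a b, |phi t| ≤ M) {x : ℝ} (hx : x ∈ Set.Icc a b) :
    nE a phi x ≤ Real.exp (M * (b - a)) :=
  Real.exp_le_exp.2 ((le_abs_self _).trans (J_bound hbphi hx))

lemma nE_ge (hbphi : ∀ t ∈ Set.Icc a b, |phi t| ≤ M) {x : ℝ} (hx : x ∈ Set.Icc a b) :
    Real.exp (-(M * (b - a))) ≤ nE a phi x :=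
  Real.exp_le_exp.2 (neg_le_of_abs_le (J_bound hbphi hx))

lemma nF_nonneg {x : ℝ} (hx : x ∈ Set.Icc a b) : 0 ≤ nF a phi x :=
  intervalIntegral.integral_nonneg hx.1 fun u _ => (Real.exp_pos _).le

lemma nF_le (hbphi : ∀ t ∈ Set.Icc a b, |phi t| ≤ M) {x : ℝ} (hx : x ∈ Set.Icc a b) :
    nF a phi x ≤ Real.exp (M * (b - a)) * (b - a) := by
  have h := intervalIntegral.norm_integral_le_of_norm_le_const
    (C := Real.exp (M * (b - a))) (f := nE a phi) (a := a) (b := x) (by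
      intro t ht
      rw [Set.uIoc_of_le hx.1] at ht
      rw [Real.norm_eq_abs, nE, abs_of_pos (Real.exp_pos _), ← nE]
      exact nE_le hbphi ⟨ht.1.le, ht.2.trans hx.2⟩)
  rw [Real.norm_eq_abs] at h
  refine (le_abs_self _).trans (h.trans ?_)
  rw [abs_of_nonneg (sub_nonneg.2 hx.1)]
  have : x - a ≤ b - a := by linarith [hx.2]
  nlinarith [Real.exp_pos (M * (b - a))]

lemma nD_ge (hab : a < b) (hphi : ContinuousOn phi (Set.Icc a b))
    (hbphi : ∀ t ∈ Set.Icc a b, |phi t| ≤ M) :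
    (b - a) * Real.exp (-(M * (b - a))) ≤ nD a b phi := by
  have hint : IntervalIntegrable (nE a phi) volume a b := by
    apply ContinuousOn.intervalIntegrable
    rw [Set.uIcc_of_le hab.le]; exact nE_cont hphi
  have := intervalIntegral.integral_mono_on (μ := volume)
    (f := fun _ => Real.exp (-(M * (b - a)))) (g := nE a phi) hab.le
    intervalIntegrable_const hint (fun t ht => nE_ge hbphi ht)
  simpa [smul_eq_mul, mul_comm, nD, nF] using this

lemma J_diff (hphi : ContinuousOn phi (Set.Icc a b)) (hpsi : ContinuousOn psi (Set.Icc a b))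
    (hδ0 : 0 ≤ δ) (hδ : ∀ t ∈ Set.Icc a b, |phi t - psi t| ≤ δ)
    {x : ℝ} (hx : x ∈ Set.Icc a b) :
    |(∫ t in a..x, phi t) - ∫ t in a..x, psi t| ≤ δ * (b - a) := by
  have h1 : IntervalIntegrable phi volume a x := by
    apply ContinuousOn.intervalIntegrable
    rw [Set.uIcc_of_le hx.1]; exact hphi.mono (Set.Icc_subset_Icc le_rfl hx.2)
  have h2 : IntervalIntegrable psi volume a x := by
    apply ContinuousOn.intervalIntegrable
    rw [Set.uIcc_of_le hx.1]; exact hpsi.mono (Set.Icc_subset_Icc le_rfl hx.2)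
  rw [← intervalIntegral.integral_sub h1 h2]
  have h := intervalIntegral.norm_integral_le_of_norm_le_const (C := δ)
    (f := fun t => phi t - psi t) (a := a) (b := x) (by
      intro t ht
      rw [Set.uIoc_of_le hx.1] at ht
      exact hδ t ⟨ht.1.le, ht.2.trans hx.2⟩)
  rw [Real.norm_eq_abs] at h
  refine h.trans ?_
  rw [abs_of_nonneg (sub_nonneg.2 hx.1)]
  have : x - a ≤ b - a := by linarith [hx.2]
  nlinarith

lemma nE_diff (hphi : ContinuousOn phi (Set.Icc a b)) (hpsi : ContinuousOn psi (Set.Icc a b))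
    (hbphi : ∀ t ∈ Set.Icc a b, |phi t| ≤ M) (hbpsi : ∀ t ∈ Set.Icc a b, |psi t| ≤ M)
    (hδ0 : 0 ≤ δ) (hδ : ∀ t ∈ Set.Icc a b, |phi t - psi t| ≤ δ)
    {x : ℝ} (hx : x ∈ Set.Icc a b) :
    |nE a phi x - nE a psi x| ≤ Real.exp (M * (b - a)) * (δ * (b - a)) := by
  have h := abs_exp_sub_exp_le (B := M * (b - a))
    ((le_abs_self _).trans (J_bound hbphi hx)) ((le_abs_self _).trans (J_bound hbpsi hx))
  refine h.trans ?_
  exact mul_le_mul_of_nonneg_left (J_diff hphi hpsi hδ0 hδ hx) (Real.exp_pos _).le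

lemma nF_diff (hphi : ContinuousOn phi (Set.Icc a b)) (hpsi : ContinuousOn psi (Set.Icc a b))
    (hbphi : ∀ t ∈ Set.Icc a b, |phi t| ≤ M) (hbpsi : ∀ t ∈ Set.Icc a b, |psi t| ≤ M)
    (hδ0 : 0 ≤ δ) (hδ : ∀ t ∈ Set.Icc a b, |phi t - psi t| ≤ δ)
    {x : ℝ} (hx : x ∈ Set.Icc a b) :
    |nF a phi x - nF a psi x| ≤ Real.exp (M * (b - a)) * (δ * (b - a)) * (b - a) := by
  have h1 : IntervalIntegrable (nE a phi) volume a x := by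
    apply ContinuousOn.intervalIntegrable
    rw [Set.uIcc_of_le hx.1]; exact (nE_cont hphi).mono (Set.Icc_subset_Icc le_rfl hx.2)
  have h2 : IntervalIntegrable (nE a psi) volume a x := by
    apply ContinuousOn.intervalIntegrable
    rw [Set.uIcc_of_le hx.1]; exact (nE_cont hpsi).mono (Set.Icc_subset_Icc le_rfl hx.2)
  rw [nF, nF, ← intervalIntegral.integral_sub h1 h2]
  have h := intervalIntegral.norm_integral_le_of_norm_le_const
    (C := Real.exp (M * (b - a)) * (δ * (b - a)))
    (f := fun t => nE a phi t - nE a psi t) (a := a) (b := x) (by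
      intro t ht
      rw [Set.uIoc_of_le hx.1] at ht
      exact nE_diff hphi hpsi hbphi hbpsi hδ0 hδ ⟨ht.1.le, ht.2.trans hx.2⟩)
  rw [Real.norm_eq_abs] at h
  refine h.trans ?_
  rw [abs_of_nonneg (sub_nonneg.2 hx.1)]
  have hx' : x - a ≤ b - a := by linarith [hx.2]
  have hA : 0 ≤ Real.exp (M * (b - a)) * (δ * (b - a)) :=
    mul_nonneg (Real.exp_pos _).le (mul_nonneg hδ0 (sub_nonneg.2 (hx.1.trans hx.2)))
  nlinarith [hA]

end formulas

set_option maxHeartbeats 1000000 in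
/-- The inverse of the nonlinearity is Lipschitz (into `C^2`) on bounded sets. -/
theorem ninv_lipschitz (a b : ℝ) (hab : a < b) (M : ℝ) (hM : 0 < M) :
    ∃ K : ℝ, 0 < K ∧
      ∀ phi psi : ℝ → ℝ,
        ContinuousOn phi (Set.Icc a b) → ContinuousOn psi (Set.Icc a b) →
        (∀ x ∈ Set.Icc a b, |phi x| ≤ M) → (∀ x ∈ Set.Icc a b, |psi x| ≤ M) →
        ∀ k ≤ 2, ∀ x ∈ Set.Icc a b,
          |iteratedDerivWithin k (ninv a b phi) (Set.Icc a b) x -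
              iteratedDerivWithin k (ninv a b psi) (Set.Icc a b) x| ≤
            K * sSup {y : ℝ | ∃ x ∈ Set.Icc a b, y = |phi x - psi x|} := by
  set c : ℝ := b - a with hcdef
  have hc : 0 < c := sub_pos.2 hab
  set L : ℝ := Real.exp (M * c) with hLdef
  set l : ℝ := Real.exp (-(M * c)) with hldef
  have hL : 0 < L := Real.exp_pos _
  have hl : 0 < l := Real.exp_pos _
  set m : ℝ := c * l with hmdef
  have hm : 0 < m := mul_pos hc hl
  set K0 : ℝ := L * c * c * c / m + L * c * c * (L * c * c) / (m * m) with hK0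
  set K1 : ℝ := L * c * c / m + c * L * (L * c * c) / (m * m) with hK1
  set K2 : ℝ := c * L * (1 + M * c) / m + c * M * L * (L * c * c) / (m * m) with hK2
  have hK0' : 0 ≤ K0 := by rw [hK0]; positivity
  have hK1' : 0 ≤ K1 := by rw [hK1]; positivity
  have hK2' : 0 ≤ K2 := by rw [hK2]; positivity
  refine ⟨K0 + K1 + K2 + 1, by linarith, ?_⟩
  intro phi psi hphi hpsi hbphi hbpsi k hk x hx
  set δ : ℝ := sSup {y : ℝ | ∃ x ∈ Set.Icc a b, y = |phi x - psi x|} with hδdef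
  have hS : ∀ t ∈ Set.Icc a b, |phi t - psi t| ≤ δ := by
    intro t ht
    apply le_csSup
    · refine ⟨2 * M, ?_⟩
      rintro y ⟨u, hu, rfl⟩
      calc |phi u - psi u| ≤ |phi u| + |psi u| := abs_sub _ _
        _ ≤ 2 * M := by linarith [hbphi u hu, hbpsi u hu]
    · exact ⟨t, ht, rfl⟩
  have hδ0 : 0 ≤ δ := (abs_nonneg _).trans (hS a ⟨le_rfl, hab.le⟩)
  -- common estimates
  have hD1 : m ≤ nD a b phi := by rw [hmdef, hldef]; exact nD_ge hab hphi hbphi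
  have hD2 : m ≤ nD a b psi := by rw [hmdef, hldef]; exact nD_ge hab hpsi hbpsi
  have hDd : |nD a b phi - nD a b psi| ≤ L * (δ * c) * c := by
    have := nF_diff hphi hpsi hbphi hbpsi hδ0 hS (right_mem_Icc.2 hab.le)
    simpa [nD, hLdef, hcdef] using this
  interval_cases k
  · -- k = 0
    rw [iter0, iter0]
    have hrw : ∀ p q : ℝ, (a + p) - (a + q) = p - q := fun p q => by ring
    rw [hrw]
    have key := div_sub_div_bound (n1 := (b - a) * nF a phi x) (n2 := (b - a) * nF a psi x)
      (e1 := c * (L * (δ * c) * c)) (B := c * (L * c)) (e2 := L * (δ * c) * c)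
      hm hD1 hD2 (by
        rw [← mul_sub, abs_mul, abs_of_pos (show (0:ℝ) < b - a from hc)]
        exact mul_le_mul_of_nonneg_left
          (by simpa [hLdef, hcdef] using nF_diff hphi hpsi hbphi hbpsi hδ0 hS hx) hc.le)
      (by
        rw [abs_mul, abs_of_pos (show (0:ℝ) < b - a from hc),
          abs_of_nonneg (nF_nonneg (phi := psi) hx)]
        exact mul_le_mul_of_nonneg_left
          (by simpa [hLdef, hcdef, mul_comm] using nF_le hbpsi hx) hc.le)
      hDd
    refine key.trans ?_
    have heq : c * (L * (δ * c) * c) / m + c * (L * c) * (L * (δ * c) * c) / (m * m)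
        = K0 * δ := by rw [hK0]; ring
    rw [heq]
    nlinarith [mul_nonneg hK0' hδ0, mul_nonneg hK1' hδ0, mul_nonneg hK2' hδ0, hδ0]
  · -- k = 1
    rw [iter1 hab hphi hx, iter1 hab hpsi hx]
    have key := div_sub_div_bound (n1 := (b - a) * nE a phi x) (n2 := (b - a) * nE a psi x)
      (e1 := c * (L * (δ * c))) (B := c * L) (e2 := L * (δ * c) * c)
      hm hD1 hD2 (by
        rw [← mul_sub, abs_mul, abs_of_pos (show (0:ℝ) < b - a from hc)]
        exact mul_le_mul_of_nonneg_left
          (by simpa [hLdef, hcdef] using nE_diff hphi hpsi hbphi hbpsi hδ0 hS hx) hc.le)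
      (by
        rw [abs_mul, abs_of_pos (show (0:ℝ) < b - a from hc),
          abs_of_pos (show (0:ℝ) < nE a psi x from Real.exp_pos _)]
        exact mul_le_mul_of_nonneg_left (by simpa [hLdef, hcdef] using nE_le hbpsi hx) hc.le)
      hDd
    refine key.trans ?_
    have heq : c * (L * (δ * c)) / m + c * L * (L * (δ * c) * c) / (m * m)
        = K1 * δ := by rw [hK1]; ring
    rw [heq]
    nlinarith [mul_nonneg hK0' hδ0, mul_nonneg hK1' hδ0, mul_nonneg hK2' hδ0, hδ0]
  · -- k = 2
    rw [iter2 hab hphi hx, iter2 hab hpsi hx]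
    have hnum : |phi x * nE a phi x - psi x * nE a psi x| ≤ L * δ + M * (L * (δ * c)) := by
      have e1 : phi x * nE a phi x - psi x * nE a psi x
          = (phi x - psi x) * nE a phi x + psi x * (nE a phi x - nE a psi x) := by ring
      rw [e1]
      refine (abs_add_le _ _).trans ?_
      rw [abs_mul, abs_mul]
      have h1 : |phi x - psi x| * |nE a phi x| ≤ δ * L := by
        apply mul_le_mul (hS x hx) _ (abs_nonneg _) hδ0
        rw [abs_of_pos (show (0:ℝ) < nE a phi x from Real.exp_pos _)]
        simpa [hLdef, hcdef] using nE_le hbphi hx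
      have h2 : |psi x| * |nE a phi x - nE a psi x| ≤ M * (L * (δ * c)) := by
        apply mul_le_mul (hbpsi x hx) _ (abs_nonneg _) hM.le
        simpa [hLdef, hcdef, mul_comm, mul_assoc, mul_left_comm]
          using nE_diff hphi hpsi hbphi hbpsi hδ0 hS hx
      calc |phi x - psi x| * |nE a phi x| + |psi x| * |nE a phi x - nE a psi x|
          ≤ δ * L + M * (L * (δ * c)) := add_le_add h1 h2
        _ = L * δ + M * (L * (δ * c)) := by ring
    have key := div_sub_div_bound (n1 := (b - a) * (phi x * nE a phi x))
      (n2 := (b - a) * (psi x * nE a psi x))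
      (e1 := c * (L * δ + M * (L * (δ * c)))) (B := c * (M * L)) (e2 := L * (δ * c) * c)
      hm hD1 hD2 (by
        rw [← mul_sub, abs_mul, abs_of_pos (show (0:ℝ) < b - a from hc)]
        exact mul_le_mul_of_nonneg_left hnum hc.le)
      (by
        rw [abs_mul, abs_of_pos (show (0:ℝ) < b - a from hc), abs_mul]
        refine mul_le_mul_of_nonneg_left ?_ hc.le
        apply mul_le_mul (hbpsi x hx) _ (abs_nonneg _) hM.le
        rw [abs_of_pos (show (0:ℝ) < nE a psi x from Real.exp_pos _)]
        simpa [hLdef, hcdef] using nE_le hbpsi hx)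
      hDd
    refine key.trans ?_
    have heq : c * (L * δ + M * (L * (δ * c))) / m + c * (M * L) * (L * (δ * c) * c) / (m * m)
        = K2 * δ := by rw [hK2]; ring
    rw [heq]
    nlinarith [mul_nonneg hK0' hδ0, mul_nonneg hK1' hδ0, mul_nonneg hK2' hδ0, hδ0]
end

section
/- Let I be a compact interval in the real line with non-empty interior, and let U be an open set in the complex plane containing I. Fix M > 0 and let F be the family of holomorphic functions f : U -> C with |f(z)| <= M for all z in U. Then for every natural number r and every alpha in (0,1) there exists L = L(r, alpha, M, I, U) > 0 such that for all f in F: sup over z in I and n in {0,1,...,r} of |f^{(n)}(z)| <= L * ( sup over z in I of |f(z)| )^alpha. -/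
set_option maxHeartbeats 1000000

open Set Complex Metric

/-- Decomposition of complex cosh into real and imaginary parts. -/
lemma cosh_decomp (z : ℂ) : Complex.cosh z =
    (Real.cosh z.re * Real.cos z.im : ℝ) + (Real.sinh z.re * Real.sin z.im : ℝ) * I := by
  conv_lhs => rw [← re_add_im z]
  rw [Complex.cosh_add, Complex.cosh_mul_I, Complex.sinh_mul_I]
  push_cast [← Complex.ofReal_cosh, ← Complex.ofReal_sinh, ← Complex.ofReal_cos,
    ← Complex.ofReal_sin]
  ring

/-- Every point at distance at most `μ^2/8` from `[-1,1]` is `cosh ξ` for some `ξ` with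
`0 ≤ re ξ ≤ μ`, when `0 < μ ≤ 1`. -/
lemma exists_cosh_eq {μ : ℝ} (hμ0 : 0 < μ) (hμ1 : μ ≤ 1) {q : ℂ}
    (hq : ∃ t : ℝ, t ∈ Set.Icc (-1:ℝ) 1 ∧ dist q (t : ℂ) ≤ μ^2/8) :
    ∃ ξ : ℂ, 0 ≤ ξ.re ∧ ξ.re ≤ μ ∧ Complex.cosh ξ = q := by
  obtain ⟨w, hw⟩ := Complex.cos_surjective q
  have hbase : Complex.cosh (w * I) = q := by rw [Complex.cosh_mul_I, hw]
  obtain ⟨ξ, hξre, hξ⟩ : ∃ ξ : ℂ, 0 ≤ ξ.re ∧ Complex.cosh ξ = q := by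
    rcases le_total 0 (w * I).re with h | h
    · exact ⟨w * I, h, hbase⟩
    · exact ⟨-(w * I), by simpa using neg_nonneg.mpr h, by rwa [Complex.cosh_neg]⟩
  refine ⟨ξ, hξre, ?_, hξ⟩
  by_contra hcon
  push_neg at hcon
  obtain ⟨t, ht, hdist⟩ := hq
  set x := ξ.re with hxdef
  set y := ξ.im with hydef
  have hdecomp := cosh_decomp ξ
  rw [hξ] at hdecomp
  have hu : q.re = Real.cosh x * Real.cos y := by
    rw [hdecomp]
    simp only [Complex.add_re, Complex.ofReal_re, Complex.mul_re, Complex.I_re,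
      Complex.ofReal_im, Complex.I_im, mul_zero, mul_one, zero_sub, sub_zero, zero_mul]
    ring
  have hv : q.im = Real.sinh x * Real.sin y := by
    rw [hdecomp]
    simp only [Complex.add_im, Complex.ofReal_im, Complex.mul_im, Complex.I_im,
      Complex.ofReal_re, Complex.I_re, mul_zero, mul_one, zero_mul, add_zero, zero_add]
    rfl
  set u := q.re
  set v := q.im
  -- bounds from distance
  have hvt : (q - (t:ℂ)).im = v := by simp; rfl
  have hut : (q - (t:ℂ)).re = u - t := by simp; rfl
  have habs_v : |v| ≤ μ^2/8 := by
    have := Complex.abs_im_le_norm (q - (t:ℂ))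
    rw [hvt] at this
    calc |v| ≤ ‖q - (t:ℂ)‖ := this
    _ ≤ μ^2/8 := by rwa [Complex.dist_eq] at hdist
  have habs_u : |u - t| ≤ μ^2/8 := by
    have := Complex.abs_re_le_norm (q - (t:ℂ))
    rw [hut] at this
    calc |u - t| ≤ ‖q - (t:ℂ)‖ := this
    _ ≤ μ^2/8 := by rwa [Complex.dist_eq] at hdist
  have habsu : |u| ≤ 1 + μ^2/8 := by
    have h1 : |t| ≤ 1 := abs_le.mpr ⟨ht.1, ht.2⟩
    calc |u| ≤ |u - t| + |t| := by simpa using abs_add_le (u - t) t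
    _ ≤ μ^2/8 + 1 := by linarith
    _ = 1 + μ^2/8 := by ring
  -- trigonometric identities
  have hsc : Real.sin y ^ 2 + Real.cos y ^ 2 = 1 := Real.sin_sq_add_cos_sq y
  have hch : Real.cosh x ^ 2 = Real.sinh x ^ 2 + 1 := Real.cosh_sq x
  have hs : μ < Real.sinh x := by
    have h1 : μ < x := hcon
    have h2 : x < Real.sinh x := Real.self_lt_sinh_iff.mpr (lt_trans hμ0 h1)
    linarith
  set s := Real.sinh x
  have key : u^2 * s^2 + v^2 * (s^2 + 1) = s^2 * (s^2 + 1) := by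
    have hu2 : u^2 = (s^2 + 1) * Real.cos y ^ 2 := by rw [hu, mul_pow, hch]
    have hv2 : v^2 = s^2 * Real.sin y ^ 2 := by rw [hv, mul_pow]
    rw [hu2, hv2]; linear_combination (s^2*(s^2+1)) * hsc
  set d := μ^2/8 with hddef
  have hd0 : 0 < d := by positivity
  have hd1 : d ≤ 1/8 := by rw [hddef]; nlinarith
  have hu2' : u^2 ≤ (1+d)^2 := by nlinarith [_root_.sq_abs u, abs_nonneg u]
  have hv2' : v^2 ≤ d^2 := by nlinarith [_root_.sq_abs v, abs_nonneg v]
  have h8d : 8*d ≤ s^2 := by rw [hddef]; nlinarith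
  have e1 : s^2*(s^2+1) ≤ (1+d)^2*s^2 + d^2*s^2 + d^2 := by
    nlinarith [key, hu2', hv2', sq_nonneg s]
  have e2 : 5*d ≤ s^2 - 2*d - 2*d^2 := by nlinarith
  have e3 : s^2*(5*d) ≤ s^2*(s^2-2*d-2*d^2) := mul_le_mul_of_nonneg_left e2 (sq_nonneg s)
  have e4 : s^2*(s^2-2*d-2*d^2) ≤ d^2 := by nlinarith [e1]
  have e5 : 8*d*(5*d) ≤ s^2*(5*d) := by nlinarith
  nlinarith [e3, e4, e5]

/-- Cauchy estimate for iterated derivatives. -/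
lemma cauchy_bound {f : ℂ → ℂ} {c : ℂ} {δ B : ℝ} (hδ : 0 < δ)
    (hf : DifferentiableOn ℂ f (Metric.closedBall c δ))
    (hB : ∀ z ∈ Metric.closedBall c δ, ‖f z‖ ≤ B) (n : ℕ) :
    ‖iteratedDeriv n f c‖ ≤ n.factorial * B / δ ^ n := by
  have hB0 : 0 ≤ B := le_trans (norm_nonneg _) (hB c (mem_closedBall_self hδ.le))
  lift δ to NNReal using hδ.le with R hR
  have hR0 : 0 < R := by exact_mod_cast hδ
  have hp : HasFPowerSeriesOnBall f (cauchyPowerSeries f c R) c R :=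
    hf.hasFPowerSeriesOnBall hR0
  have h1 : iteratedDeriv n f c = iteratedFDeriv ℂ n f c fun _ => (1:ℂ) :=
    iteratedDeriv_eq_iteratedFDeriv
  have h2 := hp.factorial_smul (1:ℂ) n
  rw [h1, ← h2]
  have h3 : ‖(n.factorial • (cauchyPowerSeries f c R n) fun _ => (1:ℂ))‖
      = n.factorial * ‖(cauchyPowerSeries f c R n) fun _ => (1:ℂ)‖ := by
    rw [← Nat.cast_smul_eq_nsmul ℝ, norm_smul, Real.norm_natCast]
  rw [h3]
  have h4 : ‖(cauchyPowerSeries f c R n) fun _ => (1:ℂ)‖ ≤ ‖cauchyPowerSeries f c R n‖ := by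
    have := (cauchyPowerSeries f c R n).le_opNorm fun _ => (1:ℂ)
    simpa using this
  have h5 : ‖cauchyPowerSeries f c R n‖ ≤ B * ((R:ℝ)⁻¹) ^ n := by
    refine le_trans (norm_cauchyPowerSeries_le f c R n) ?_
    have hint : (2 * Real.pi)⁻¹ * ∫ θ : ℝ in (0)..2 * Real.pi, ‖f (circleMap c R θ)‖ ≤ B := by
      have hb : ∀ θ ∈ Set.uIoc (0:ℝ) (2 * Real.pi), ‖‖f (circleMap c R θ)‖‖ ≤ B := by
        intro θ _
        rw [norm_norm]
        have hmem : circleMap c R θ ∈ Metric.closedBall c (R:ℝ) :=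
          sphere_subset_closedBall (circleMap_mem_sphere c R.coe_nonneg θ)
        simpa using hB _ hmem
      have := intervalIntegral.norm_integral_le_of_norm_le_const hb
      have h2pi : (0:ℝ) < 2 * Real.pi := Real.two_pi_pos
      rw [abs_of_pos (by linarith : (0:ℝ) < 2 * Real.pi - 0)] at this
      have hle : ∫ θ : ℝ in (0)..2 * Real.pi, ‖f (circleMap c R θ)‖
          ≤ B * (2 * Real.pi - 0) := le_trans (le_abs_self _) this
      rw [inv_mul_le_iff₀ h2pi]
      calc (∫ θ : ℝ in (0)..2 * Real.pi, ‖f (circleMap c R θ)‖) ≤ B * (2 * Real.pi - 0) := hle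
      _ = B * (2 * Real.pi) := by ring
      _ = 2 * Real.pi * B := by ring
    have : |(R:ℝ)|⁻¹ ^ n = ((R:ℝ)⁻¹) ^ n := by rw [abs_of_pos (by exact_mod_cast hR0)]
    rw [this]
    exact mul_le_mul_of_nonneg_right hint (by positivity)
  calc (n.factorial : ℝ) * ‖(cauchyPowerSeries f c R n) fun _ => (1:ℂ)‖
      ≤ n.factorial * (B * ((R:ℝ)⁻¹) ^ n) :=
        mul_le_mul_of_nonneg_left (le_trans h4 h5) (by positivity)
  _ = n.factorial * B / (R:ℝ) ^ n := by rw [div_eq_mul_inv, ← inv_pow]; ring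

open Complex.HadamardThreeLines


open Set

/-- The `C^r` norm on a real interval is Hölder-controlled by the `C^0` norm, for
holomorphic functions bounded on a complex neighbourhood of the interval. -/
theorem cr_norm_holder_c0 (a b : ℝ) (hab : a < b) (U : Set ℂ) (hU : IsOpen U)
    (hIU : (fun t : ℝ => (t : ℂ)) '' Set.Icc a b ⊆ U) (M : ℝ) (hM : 0 < M) :
    ∀ (r : ℕ) (alpha : ℝ), alpha ∈ Set.Ioo (0 : ℝ) 1 →
      ∃ L : ℝ, 0 < L ∧
        ∀ f : ℂ → ℂ, DifferentiableOn ℂ f U → (∀ z ∈ U, ‖f z‖ ≤ M) →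
          sSup {y : ℝ | ∃ n ≤ r, ∃ x ∈ Set.Icc a b,
              y = ‖iteratedDeriv n f (x : ℂ)‖} ≤
            L * sSup {y : ℝ | ∃ x ∈ Set.Icc a b, y = ‖f (x : ℂ)‖} ^ alpha := by
  intro r α hα
  obtain ⟨hα0, hα1⟩ := hα
  set c : ℝ := (a + b) / 2 with hcdef
  set ρ : ℝ := (b - a) / 2 with hρdef
  have hρ : 0 < ρ := by rw [hρdef]; linarith
  have hca : c - ρ = a := by rw [hcdef, hρdef]; ring
  have hcb : c + ρ = b := by rw [hcdef, hρdef]; ring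
  have hIc : IsCompact ((fun t : ℝ => (t : ℂ)) '' Set.Icc a b) :=
    isCompact_Icc.image Complex.continuous_ofReal
  obtain ⟨ε, hε, hth⟩ := hIc.exists_cthickening_subset_open hU hIU
  set τ : ℝ := min 1 (ε / (Real.exp 1 * ρ)) with hτdef
  have hτ0 : 0 < τ := lt_min one_pos (by positivity)
  have hτ1 : τ ≤ 1 := min_le_left _ _
  have hτε : ρ * (Real.exp τ - 1) ≤ ε := by
    have h1 : 1 - τ ≤ Real.exp (-τ) := by have := Real.add_one_le_exp (-τ); linarith
    have h2 : Real.exp τ ≤ Real.exp 1 := Real.exp_le_exp.mpr hτ1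
    have h3 : Real.exp τ * Real.exp (-τ) = 1 := by
      rw [← Real.exp_add]; simp
    have h4 : Real.exp τ - 1 ≤ τ * Real.exp 1 := by nlinarith [Real.exp_pos τ]
    have h5 : τ ≤ ε / (Real.exp 1 * ρ) := min_le_right _ _
    have h6 : τ * (Real.exp 1 * ρ) ≤ ε := by
      rw [← le_div_iff₀ (by positivity)]; exact h5
    nlinarith
  -- the conformal map sends the closed unit strip into `U`
  have factA : ∀ ζ : ℂ, ζ.re ∈ Set.Icc (0:ℝ) 1 →
      ((c:ℂ) + (ρ:ℂ) * Complex.cosh ((τ:ℂ) * ζ)) ∈ U := by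
    intro ζ hζ
    apply hth
    have hre : ((τ:ℂ) * ζ).re = τ * ζ.re := by
      simp [Complex.mul_re]
    set x : ℝ := τ * ζ.re with hxdef
    set y : ℝ := ((τ:ℂ) * ζ).im with hydef
    have hx0 : 0 ≤ x := mul_nonneg hτ0.le hζ.1
    have hxτ : x ≤ τ := by
      calc x = τ * ζ.re := rfl
      _ ≤ τ * 1 := mul_le_mul_of_nonneg_left hζ.2 hτ0.le
      _ = τ := mul_one τ
    set p0 : ℝ := c + ρ * Real.cos y with hp0def
    have hp0 : p0 ∈ Set.Icc a b := by
      constructor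
      · rw [hp0def, ← hca]; nlinarith [Real.neg_one_le_cos y]
      · rw [hp0def, ← hcb]; nlinarith [Real.cos_le_one y]
    refine Metric.mem_cthickening_of_dist_le _ ((p0 : ℝ) : ℂ) ε
      ((fun t : ℝ => (t:ℂ)) '' Set.Icc a b) ⟨p0, hp0, rfl⟩ ?_
    have hdecomp := cosh_decomp ((τ:ℂ) * ζ)
    rw [hre] at hdecomp
    have hdiff : (c:ℂ) + (ρ:ℂ) * Complex.cosh ((τ:ℂ) * ζ) - ((p0 : ℝ) : ℂ)
        = (ρ:ℂ) * (((Real.cosh x * Real.cos y - Real.cos y : ℝ) : ℂ)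
            + ((Real.sinh x * Real.sin y : ℝ) : ℂ) * Complex.I) := by
      rw [hdecomp, hp0def]
      push_cast
      ring
    rw [Complex.dist_eq, hdiff]
    have habs : ‖(((Real.cosh x * Real.cos y - Real.cos y : ℝ) : ℂ)
        + ((Real.sinh x * Real.sin y : ℝ) : ℂ) * Complex.I)‖ ≤ Real.exp τ - 1 := by
      have e1 : ‖(((Real.cosh x * Real.cos y - Real.cos y : ℝ) : ℂ)
          + ((Real.sinh x * Real.sin y : ℝ) : ℂ) * Complex.I)‖
          ≤ |Real.cosh x * Real.cos y - Real.cos y| + |Real.sinh x * Real.sin y| := by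
        refine le_trans (norm_add_le _ _) ?_
        rw [Complex.norm_real, Real.norm_eq_abs, norm_mul, Complex.norm_real, Real.norm_eq_abs, Complex.norm_I, mul_one]
      have e2 : |Real.cosh x * Real.cos y - Real.cos y| ≤ Real.cosh x - 1 := by
        have : Real.cosh x * Real.cos y - Real.cos y = Real.cos y * (Real.cosh x - 1) := by ring
        rw [this, abs_mul, _root_.abs_of_nonneg (by linarith [Real.one_le_cosh x] : (0:ℝ) ≤ Real.cosh x - 1)]
        nlinarith [Real.abs_cos_le_one y, abs_nonneg (Real.cos y), Real.one_le_cosh x]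
      have e3 : |Real.sinh x * Real.sin y| ≤ Real.sinh x := by
        rw [abs_mul, _root_.abs_of_nonneg (Real.sinh_nonneg_iff.mpr hx0)]
        nlinarith [Real.abs_sin_le_one y, abs_nonneg (Real.sin y),
          Real.sinh_nonneg_iff.mpr hx0]
      have e4 : Real.cosh x - 1 + Real.sinh x = Real.exp x - 1 := by
        rw [Real.cosh_eq, Real.sinh_eq]; ring
      have e5 : Real.exp x ≤ Real.exp τ := Real.exp_le_exp.mpr hxτ
      linarith
    rw [norm_mul, Complex.norm_real, Real.norm_eq_abs, abs_of_pos hρ]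
    calc ρ * ‖_‖ ≤ ρ * (Real.exp τ - 1) :=
      mul_le_mul_of_nonneg_left habs hρ.le
    _ ≤ ε := hτε
  set μ : ℝ := (1 - α) * τ with hμdef
  have hμ0 : 0 < μ := by apply mul_pos <;> [linarith; exact hτ0]
  have hμ1 : μ ≤ 1 := by
    rw [hμdef]; nlinarith
  set δ : ℝ := ρ * (μ ^ 2 / 8) with hδdef
  have hδ0 : 0 < δ := by positivity
  -- every point δ-close to the interval is in the image of the substrip of width 1-α
  have claimZ : ∀ z : ℂ, (∃ x ∈ Set.Icc a b, dist z (x:ℂ) ≤ δ) →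
      ∃ ζ : ℂ, ζ.re ∈ Set.Icc (0:ℝ) (1 - α) ∧ z = (c:ℂ) + (ρ:ℂ) * Complex.cosh ((τ:ℂ) * ζ) := by
    intro z ⟨x, hx, hdist⟩
    set q : ℂ := (z - (c:ℂ)) / (ρ:ℂ) with hqdef
    have hq : ∃ t : ℝ, t ∈ Set.Icc (-1:ℝ) 1 ∧ dist q (t:ℂ) ≤ μ^2/8 := by
      refine ⟨(x - c) / ρ, ⟨?_, ?_⟩, ?_⟩
      · rw [le_div_iff₀ hρ]; linarith [hx.1]
      · rw [div_le_one hρ]; linarith [hx.2]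
      · have : q - (((x - c) / ρ : ℝ) : ℂ) = (z - (x:ℂ)) / (ρ:ℂ) := by
          rw [hqdef]; push_cast; rw [div_sub_div_same]; congr 1; ring
        rw [Complex.dist_eq, this, norm_div, Complex.norm_real, Real.norm_eq_abs, abs_of_pos hρ,
          div_le_iff₀ hρ]
        calc ‖z - (x:ℂ)‖ = dist z (x:ℂ) := (Complex.dist_eq _ _).symm
        _ ≤ δ := hdist
        _ = μ^2/8 * ρ := by rw [hδdef]; ring
    obtain ⟨ξ, hξ0, hξμ, hξcosh⟩ := exists_cosh_eq hμ0 hμ1 hq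
    refine ⟨ξ * ((τ:ℂ))⁻¹, ?_, ?_⟩
    · have hre : (ξ * ((τ:ℂ))⁻¹).re = ξ.re * τ⁻¹ := by
        rw [← Complex.ofReal_inv, Complex.mul_re, Complex.ofReal_re, Complex.ofReal_im,
          mul_zero, sub_zero]
      rw [hre]
      refine ⟨mul_nonneg hξ0 (by positivity), ?_⟩
      have e1 : ξ.re * τ⁻¹ ≤ μ * τ⁻¹ :=
        mul_le_mul_of_nonneg_right hξμ (by positivity)
      have e2 : μ * τ⁻¹ = 1 - α := by rw [hμdef]; field_simp
      linarith
    · have hneτ : ((τ:ℂ)) ≠ 0 := Complex.ofReal_ne_zero.mpr hτ0.ne'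
      have hneρ : ((ρ:ℂ)) ≠ 0 := Complex.ofReal_ne_zero.mpr hρ.ne'
      have hτζ : (τ:ℂ) * (ξ * ((τ:ℂ))⁻¹) = ξ := by
        field_simp
      rw [hτζ, hξcosh, hqdef]
      field_simp
      ring
  set B : ℝ := Real.exp 1 with hBdef -- dummy to keep a name; not used
  refine ⟨(r.factorial : ℝ) * (max 1 δ⁻¹) ^ r * M ^ (1 - α), by positivity, ?_⟩
  intro f hf hfM
  set m : ℝ := sSup {y : ℝ | ∃ x ∈ Set.Icc a b, y = ‖f (x:ℂ)‖} with hmdef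
  have hS0bdd : BddAbove {y : ℝ | ∃ x ∈ Set.Icc a b, y = ‖f (x:ℂ)‖} := by
    refine ⟨M, ?_⟩
    rintro y ⟨x, hx, rfl⟩
    exact hfM _ (hIU ⟨x, hx, rfl⟩)
  have hm0 : 0 ≤ m := Real.sSup_nonneg (by rintro y ⟨x, hx, rfl⟩; exact norm_nonneg _)
  have hmM : m ≤ M := Real.sSup_le (by rintro y ⟨x, hx, rfl⟩; exact hfM _ (hIU ⟨x, hx, rfl⟩)) hM.le
  have hfm : ∀ x ∈ Set.Icc a b, ‖f (x:ℂ)‖ ≤ m :=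
    fun x hx => le_csSup hS0bdd ⟨x, hx, rfl⟩
  -- the strip function
  set h : ℂ → ℂ := fun w => f ((c:ℂ) + (ρ:ℂ) * Complex.cosh ((τ:ℂ) * w)) with hhdef
  have hmaps : ∀ w ∈ verticalClosedStrip 0 1,
      ((c:ℂ) + (ρ:ℂ) * Complex.cosh ((τ:ℂ) * w)) ∈ U := fun w hw => factA w hw
  have hd : DiffContOnCl ℂ h (verticalStrip 0 1) := by
    apply DifferentiableOn.diffContOnCl
    have hclos : closure (verticalStrip 0 1) ⊆ verticalClosedStrip 0 1 := by
      rw [verticalStrip, Complex.closure_preimage_re, closure_Ioo (zero_ne_one)]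
      exact subset_rfl
    refine DifferentiableOn.mono ?_ hclos
    apply DifferentiableOn.comp hf
    · apply Differentiable.differentiableOn
      apply Differentiable.const_add
      apply Differentiable.const_mul
      exact Complex.differentiable_cosh.comp (differentiable_id.const_mul _)
    · exact hmaps
  have hBdd : BddAbove ((norm ∘ h) '' verticalClosedStrip 0 1) := by
    refine ⟨M, ?_⟩
    rintro y ⟨w, hw, rfl⟩
    exact hfM _ (hmaps w hw)
  have ha : ∀ w ∈ Complex.re ⁻¹' {(0:ℝ)}, ‖h w‖ ≤ m := by
    intro w hw
    have hw0 : w.re = 0 := hw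
    have hre : ((τ:ℂ) * w).re = 0 := by simp [Complex.mul_re, hw0]
    have hdecomp := cosh_decomp ((τ:ℂ) * w)
    rw [hre, Real.cosh_zero, Real.sinh_zero, one_mul, zero_mul] at hdecomp
    set y := ((τ:ℂ) * w).im
    have hpt : (c:ℂ) + (ρ:ℂ) * Complex.cosh ((τ:ℂ) * w) = ((c + ρ * Real.cos y : ℝ) : ℂ) := by
      rw [hdecomp]; push_cast; ring
    have hmem : c + ρ * Real.cos y ∈ Set.Icc a b := by
      constructor
      · rw [← hca]; nlinarith [Real.neg_one_le_cos y]
      · rw [← hcb]; nlinarith [Real.cos_le_one y]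
    rw [hhdef]
    beta_reduce
    rw [hpt]
    exact hfm _ hmem
  have hb : ∀ w ∈ Complex.re ⁻¹' {(1:ℝ)}, ‖h w‖ ≤ M := by
    intro w hw
    have hw1 : w.re = 1 := hw
    exact hfM _ (factA w (by rw [hw1]; exact ⟨zero_le_one, le_refl 1⟩))
  -- interior Hölder bound
  have claimB : ∀ z : ℂ, (∃ x ∈ Set.Icc a b, dist z (x:ℂ) ≤ δ) →
      ‖f z‖ ≤ m ^ α * M ^ (1 - α) := by
    intro z hz
    obtain ⟨ζ, hζre, hzeq⟩ := claimZ z hz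
    have hmem : ζ ∈ verticalClosedStrip 0 1 :=
      ⟨hζre.1, by linarith [hζre.2]⟩
    have h3l := norm_le_interp_of_mem_verticalClosedStrip₀₁' h hmem hd hBdd ha hb
    have hval : ‖h ζ‖ = ‖f z‖ := by
      rw [hhdef]; beta_reduce; rw [hzeq]
    rw [hval] at h3l
    set t := ζ.re
    have ht0 : 0 ≤ t := hζre.1
    have ht1 : t ≤ 1 - α := hζre.2
    have hfinal : m ^ (1 - t) * M ^ t ≤ m ^ α * M ^ (1 - α) := by
      rcases eq_or_lt_of_le hm0 with hmeq | hmpos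
      · rw [← hmeq, Real.zero_rpow (by linarith : (1:ℝ) - t ≠ 0),
          Real.zero_rpow (ne_of_gt hα0), zero_mul, zero_mul]
      · have e1 : m ^ (1 - t) = m ^ α * m ^ (1 - t - α) := by
          rw [← Real.rpow_add hmpos]; ring_nf
        have e2 : m ^ (1 - t - α) ≤ M ^ (1 - t - α) :=
          Real.rpow_le_rpow hm0 hmM (by linarith)
        have e3 : M ^ (1 - t - α) * M ^ t = M ^ (1 - α) := by
          rw [← Real.rpow_add hM]; ring_nf
        calc m ^ (1 - t) * M ^ t = m ^ α * (m ^ (1 - t - α) * M ^ t) := by rw [e1]; ring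
        _ ≤ m ^ α * (M ^ (1 - t - α) * M ^ t) := by
          apply mul_le_mul_of_nonneg_left _ (Real.rpow_nonneg hm0 _)
          exact mul_le_mul_of_nonneg_right e2 (Real.rpow_nonneg hM.le _)
        _ = m ^ α * M ^ (1 - α) := by rw [e3]
    exact le_trans h3l hfinal
  -- Cauchy estimates
  have claimC : ∀ n, n ≤ r → ∀ x ∈ Set.Icc a b,
      ‖iteratedDeriv n f (x:ℂ)‖ ≤
        n.factorial * (m ^ α * M ^ (1 - α)) / δ ^ n := by
    intro n hn x hx
    have hsubU : Metric.closedBall (x:ℂ) δ ⊆ U := by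
      intro z hz
      obtain ⟨ζ, hζre, hzeq⟩ := claimZ z ⟨x, hx, Metric.mem_closedBall.mp hz⟩
      rw [hzeq]
      exact factA ζ ⟨hζre.1, by linarith [hζre.2]⟩
    exact cauchy_bound hδ0 (hf.mono hsubU)
      (fun z hz => claimB z ⟨x, hx, Metric.mem_closedBall.mp hz⟩) n
  apply Real.sSup_le
  · rintro y ⟨n, hn, x, hx, rfl⟩
    have hC := claimC n hn x hx
    have hfac : (n.factorial : ℝ) * (δ⁻¹) ^ n ≤ (r.factorial : ℝ) * (max 1 δ⁻¹) ^ r := by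
      apply mul_le_mul
      · exact_mod_cast Nat.factorial_le hn
      · calc (δ⁻¹) ^ n ≤ (max 1 δ⁻¹) ^ n :=
          pow_le_pow_left₀ (by positivity) (le_max_right _ _) n
        _ ≤ (max 1 δ⁻¹) ^ r := pow_le_pow_right₀ (le_max_left _ _) hn
      · positivity
      · positivity
    calc ‖iteratedDeriv n f (x:ℂ)‖
        ≤ n.factorial * (m ^ α * M ^ (1 - α)) / δ ^ n := hC
    _ = ((n.factorial : ℝ) * (δ⁻¹) ^ n) * (M ^ (1 - α) * m ^ α) := by
        rw [div_eq_mul_inv, ← inv_pow]; ring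
    _ ≤ ((r.factorial : ℝ) * (max 1 δ⁻¹) ^ r) * (M ^ (1 - α) * m ^ α) := by
        apply mul_le_mul_of_nonneg_right hfac
        apply mul_nonneg (Real.rpow_nonneg hM.le _) (Real.rpow_nonneg hm0 _)
    _ = (r.factorial : ℝ) * (max 1 δ⁻¹) ^ r * M ^ (1 - α) * m ^ α := by ring
  · exact mul_nonneg (by positivity) (Real.rpow_nonneg hm0 _)
end
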